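/- Let R be a ring with local units, P a locally projective unitary left R-module, and S a subring of End_R(P) such that P is a unitary right S-module, S·End_R(P) = S, and Pf is a finitely generated left R-module for every idempotent f ∈ S. Let N be a unitary left R-module with st_P(N) = 0. Then: (a) Hom_R(X,N) = 0 for every unitary left R-module X with SHom_R(P,X) = 0; (b) if N is an injective object in RMod, then the evaluation morphism γ_N : N → RHom_S(G_P, SHom_R(P,N)) is an isomorphism. -/

import Mathlib

set_option linter.unusedVariables false

/-! ### Core: non-unital rings with local units, modules, homomorphisms, categories -/

universe u v w

open MulOpposite CategoryTheory

/-- A ring with local units: every finite subset is contained in a subring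
of the form `eRe` for an idempotent `e`; equivalently, every finite subset
admits an idempotent acting as a two-sided identity on it. -/
class HasLocalUnits (R : Type u) [NonUnitalRing R] : Prop where
  exists_unit : ∀ s : Finset R, ∃ e : R, e * e = e ∧ ∀ x ∈ s, e * x = x ∧ x * e = x

/-- A (left) module over a non-unital ring. -/
class LMod (R : Type u) [NonUnitalRing R] (M : Type v) [AddCommGroup M] extends SMul R M where
  smul_add' : ∀ (r : R) (m n : M), r • (m + n) = r • m + r • n
  add_smul' : ∀ (r s : R) (m : M), (r + s) • m = r • m + s • m
  mul_smul' : ∀ (r s : R) (m : M), (r * s) • m = r • (s • m)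

section basic
variable {R : Type u} [NonUnitalRing R] {M : Type v} [AddCommGroup M] [LMod R M]

theorem LMod.smul_zero' (r : R) : r • (0 : M) = 0 := by
  have h := LMod.smul_add' r (0 : M) 0
  rw [add_zero] at h
  have h2 : r • (0 : M) + r • (0 : M) = r • (0 : M) + 0 := by rw [← h, add_zero]
  exact add_left_cancel h2

theorem LMod.zero_smul' (m : M) : (0 : R) • m = 0 := by
  have h := LMod.add_smul' (0 : R) 0 m
  rw [add_zero] at h
  have h2 : (0 : R) • m + (0 : R) • m = (0 : R) • m + 0 := by rw [← h, add_zero]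
  exact add_left_cancel h2

theorem LMod.smul_neg' (r : R) (m : M) : r • (-m) = -(r • m) := by
  have h : r • m + r • (-m) = 0 := by
    rw [← LMod.smul_add' r m (-m), add_neg_cancel, LMod.smul_zero']
  exact eq_neg_of_add_eq_zero_right h

end basic

/-- `f : M → N` is a homomorphism of (non-unital) `R`-modules. -/
structure IsLHom (R : Type u) [NonUnitalRing R] {M : Type v} {N : Type w}
    [AddCommGroup M] [AddCommGroup N] [LMod R M] [LMod R N] (f : M → N) : Prop where
  map_add : ∀ x y, f (x + y) = f x + f y
  map_smul : ∀ (r : R) (x : M), f (r • x) = r • f x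

theorem IsLHom.map_zero {R : Type u} [NonUnitalRing R] {M : Type v} {N : Type w}
    [AddCommGroup M] [AddCommGroup N] [LMod R M] [LMod R N] {f : M → N}
    (hf : IsLHom R f) : f 0 = 0 := by
  have h := hf.map_add 0 0
  rw [add_zero] at h
  have h2 : f 0 + f 0 = f 0 + 0 := by rw [← h, add_zero]
  exact add_left_cancel h2

theorem IsLHom.map_neg {R : Type u} [NonUnitalRing R] {M : Type v} {N : Type w}
    [AddCommGroup M] [AddCommGroup N] [LMod R M] [LMod R N] {f : M → N}
    (hf : IsLHom R f) (x : M) : f (-x) = -(f x) := by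
  have h : f x + f (-x) = 0 := by rw [← hf.map_add, add_neg_cancel, hf.map_zero]
  exact eq_neg_of_add_eq_zero_right h

/-- The type of homomorphisms of (non-unital) `R`-modules. -/
def LinMap (R : Type u) [NonUnitalRing R] (M : Type v) (N : Type w)
    [AddCommGroup M] [AddCommGroup N] [LMod R M] [LMod R N] : Type (max v w) :=
  {f : M → N // IsLHom R f}

namespace LinMap

variable {R : Type u} [NonUnitalRing R] {M : Type v} {N : Type w}
    [AddCommGroup M] [AddCommGroup N] [LMod R M] [LMod R N]

theorem ext {f g : LinMap R M N} (h : f.1 = g.1) : f = g := Subtype.ext h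

instance : Add (LinMap R M N) :=
  ⟨fun f g => ⟨fun x => f.1 x + g.1 x,
    ⟨fun x y => by rw [f.2.map_add, g.2.map_add]; abel,
     fun r x => by rw [f.2.map_smul, g.2.map_smul, LMod.smul_add']⟩⟩⟩

instance : Zero (LinMap R M N) :=
  ⟨⟨fun _ => 0, ⟨fun _ _ => by rw [add_zero], fun r _ => (LMod.smul_zero' r).symm⟩⟩⟩

instance : Neg (LinMap R M N) :=
  ⟨fun f => ⟨fun x => -(f.1 x),
    ⟨fun x y => by rw [f.2.map_add]; abel,
     fun r x => by rw [f.2.map_smul, LMod.smul_neg']⟩⟩⟩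

instance : AddCommGroup (LinMap R M N) where
  add_assoc f g h := ext (funext fun x => add_assoc _ _ _)
  zero_add f := ext (funext fun x => zero_add _)
  add_zero f := ext (funext fun x => add_zero _)
  add_comm f g := ext (funext fun x => add_comm _ _)
  neg_add_cancel f := ext (funext fun x => neg_add_cancel _)
  nsmul := nsmulRec
  zsmul := zsmulRec

@[simp] theorem add_apply (f g : LinMap R M N) (x : M) : (f + g).1 x = f.1 x + g.1 x := rfl
@[simp] theorem zero_apply (x : M) : (0 : LinMap R M N).1 x = 0 := rfl
@[simp] theorem neg_apply (f : LinMap R M N) (x : M) : (-f).1 x = -(f.1 x) := rfl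

end LinMap

/-- The endomorphism ring of a module over a non-unital ring, with the
"diagrammatic" multiplication `(f * g) x = g (f x)` (i.e. `f * g` means
"first `f`, then `g`", matching homomorphisms written on the right). -/
instance LinMap.instNonUnitalRing {R : Type u} [NonUnitalRing R] {M : Type v}
    [AddCommGroup M] [LMod R M] : NonUnitalRing (LinMap R M M) :=
  { (inferInstance : AddCommGroup (LinMap R M M)) with
    mul := fun f g => ⟨fun x => g.1 (f.1 x),
      ⟨fun x y => by rw [f.2.map_add, g.2.map_add], fun r x => by rw [f.2.map_smul, g.2.map_smul]⟩⟩
    left_distrib := fun f g h => LinMap.ext (funext fun x => rfl)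
    right_distrib := fun f g h => LinMap.ext (funext fun x => h.2.map_add _ _)
    zero_mul := fun f => LinMap.ext (funext fun x => f.2.map_zero)
    mul_zero := fun f => LinMap.ext (funext fun x => rfl)
    mul_assoc := fun f g h => LinMap.ext (funext fun x => rfl) }

@[simp] theorem LinMap.mul_apply {R : Type u} [NonUnitalRing R] {M : Type v}
    [AddCommGroup M] [LMod R M] (f g : LinMap R M M) (x : M) : (f * g).1 x = g.1 (f.1 x) := rfl

/-- A module `M` over a non-unital ring `R` is unitary if `RM = M`. -/
def IsUnitary (R : Type u) [NonUnitalRing R] (M : Type v) [AddCommGroup M] [LMod R M] : Prop :=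
  ∀ m : M, m ∈ AddSubgroup.closure {x : M | ∃ (r : R) (n : M), x = r • n}

/-- The `R`-submodule (as an additive subgroup) generated by a subset. -/
def lspan (R : Type u) [NonUnitalRing R] {M : Type v} [AddCommGroup M] [LMod R M]
    (X : Set M) : AddSubgroup M :=
  AddSubgroup.closure (X ∪ {m | ∃ (r : R) (x : M), x ∈ X ∧ m = r • x})

/-- A subset `A` of a module is finitely generated (as an `R`-submodule). -/
def IsFGSet (R : Type u) [NonUnitalRing R] {M : Type v} [AddCommGroup M] [LMod R M]
    (A : Set M) : Prop :=
  ∃ s : Finset M, (↑s : Set M) ⊆ A ∧ ∀ a ∈ A, a ∈ lspan R (↑s : Set M)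

/-- A finitely generated module over a non-unital ring. -/
def IsFG (R : Type u) [NonUnitalRing R] (M : Type v) [AddCommGroup M] [LMod R M] : Prop :=
  ∃ s : Finset M, ∀ m : M, m ∈ lspan R (↑s : Set M)

/-- The category of unitary left modules over a ring with local units
(objects: unitary left `R`-modules). -/
structure UMod (R : Type u) [NonUnitalRing R] : Type (max u (v + 1)) where
  carrier : Type v
  [grp : AddCommGroup carrier]
  [mod : LMod R carrier]
  unitary : IsUnitary R carrier

attribute [instance] UMod.grp UMod.mod

instance {R : Type u} [NonUnitalRing R] : CoeSort (UMod.{u, v} R) (Type v) := ⟨UMod.carrier⟩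

instance UMod.instCategory {R : Type u} [NonUnitalRing R] : Category (UMod.{u, v} R) where
  Hom M N := LinMap R M.carrier N.carrier
  id M := ⟨fun x => x, ⟨fun _ _ => rfl, fun _ _ => rfl⟩⟩
  comp f g := ⟨fun x => g.1 (f.1 x),
    ⟨fun x y => by rw [f.2.map_add, g.2.map_add], fun r x => by rw [f.2.map_smul, g.2.map_smul]⟩⟩
  id_comp f := LinMap.ext rfl
  comp_id f := LinMap.ext rfl
  assoc f g h := LinMap.ext rfl

@[simp] theorem UMod.comp_apply {R : Type u} [NonUnitalRing R] {M N K : UMod.{u, v} R}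
    (f : M ⟶ N) (g : N ⟶ K) (x : M.carrier) : (f ≫ g).1 x = g.1 (f.1 x) := rfl

@[simp] theorem UMod.id_apply {R : Type u} [NonUnitalRing R] {M : UMod.{u, v} R}
    (x : M.carrier) : (𝟙 M : M ⟶ M).1 x = x := rfl

instance UMod.instPreadditive {R : Type u} [NonUnitalRing R] :
    Preadditive (UMod.{u, v} R) where
  homGroup M N := inferInstanceAs (AddCommGroup (LinMap R M.carrier N.carrier))
  add_comp M N K f f' g := LinMap.ext (funext fun x => g.2.map_add _ _)
  comp_add M N K f g g' := LinMap.ext (funext fun x => rfl)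

/-- A unitary module `P` is a generator of the category of unitary left `R`-modules. -/
def IsGenerator (R : Type u) [NonUnitalRing R] (P : UMod.{u, v} R) : Prop :=
  ∀ (M B : UMod.{u, v} R) (f g : M ⟶ B), f ≠ g → ∃ h : P ⟶ M, h ≫ f ≠ h ≫ g

/-- A set of unitary modules is a cogenerating set for the category of
unitary left `R`-modules. -/
def IsCogenSet (R : Type u) [NonUnitalRing R] (𝒰 : Set (UMod.{u, v} R)) : Prop :=
  ∀ (B M : UMod.{u, v} R) (f g : B ⟶ M), f ≠ g → ∃ U' ∈ 𝒰, ∃ h : M ⟶ U', f ≫ h ≠ g ≫ h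
/-! ### The largest unitary submodule `C·H` of a module `H`, and induced
module structures on hom-groups -/

section umax

variable (C : Type u) [NonUnitalRing C] (H : Type v) [AddCommGroup H] [LMod C H]

/-- `C·H`, the largest unitary `C`-submodule of the `C`-module `H`. -/
def umax : AddSubgroup H :=
  AddSubgroup.closure {h : H | ∃ (c : C) (h' : H), h = c • h'}

variable {C H}

theorem smul_mem_umax (c : C) (h : H) : c • h ∈ umax C H :=
  AddSubgroup.subset_closure ⟨c, h, rfl⟩

/-- An additive, `C`-equivariant map carries `C·H` into `C·H'`. -/
theorem umax_mapsTo {H' : Type w} [AddCommGroup H'] [LMod C H'] (T : H → H')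
    (hadd : ∀ x y, T (x + y) = T x + T y) (hsmul : ∀ (c : C) (x : H), T (c • x) = c • T x)
    {h : H} (hh : h ∈ umax C H) : T h ∈ umax C H' := by
  have hT : IsLHom C T := ⟨hadd, hsmul⟩
  induction hh using AddSubgroup.closure_induction with
  | mem x hx =>
    obtain ⟨c, h', rfl⟩ := hx
    rw [hsmul]; exact smul_mem_umax c (T h')
  | zero => rw [hT.map_zero]; exact (umax C H').zero_mem
  | add x y hx hy ihx ihy => rw [hadd]; exact (umax C H').add_mem ihx ihy
  | neg x hx ihx => rw [hT.map_neg]; exact (umax C H').neg_mem ihx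

instance umax.instLMod : LMod C ↥(umax C H) where
  smul c h := ⟨c • h.1, smul_mem_umax c h.1⟩
  smul_add' c m n := Subtype.ext (LMod.smul_add' c m.1 n.1)
  add_smul' c c' m := Subtype.ext (LMod.add_smul' c c' m.1)
  mul_smul' c c' m := Subtype.ext (LMod.mul_smul' c c' m.1)

@[simp] theorem umax.smul_coe (c : C) (h : ↥(umax C H)) : (c • h).1 = c • h.1 := rfl

/-- If a second ring `D` acts on `H` commuting with the `C`-action,
then `C·H` is stable under the `D`-action. -/
theorem umax_stable {D : Type w} [NonUnitalRing D] [LMod D H] [SMulCommClass C D H]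
    (d : D) {h : H} (hh : h ∈ umax C H) : d • h ∈ umax C H :=
  umax_mapsTo (fun x => d • x) (fun x y => LMod.smul_add' d x y)
    (fun c x => (smul_comm c d x).symm) hh

instance umax.instLMod₂ {D : Type w} [NonUnitalRing D] [LMod D H] [SMulCommClass C D H] :
    LMod D ↥(umax C H) where
  smul d h := ⟨d • h.1, umax_stable d h.2⟩
  smul_add' d m n := Subtype.ext (LMod.smul_add' d m.1 n.1)
  add_smul' d d' m := Subtype.ext (LMod.add_smul' d d' m.1)
  mul_smul' d d' m := Subtype.ext (LMod.mul_smul' d d' m.1)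

instance umax.instSMulCommClass {D : Type w} [NonUnitalRing D] [LMod D H]
    [SMulCommClass C D H] : SMulCommClass C D ↥(umax C H) :=
  ⟨fun c d h => Subtype.ext (smul_comm c d h.1)⟩

/-- If `C` has local units, then `C·H` is a unitary `C`-module. -/
theorem umax_unitary [HasLocalUnits C] : IsUnitary C ↥(umax C H) := by
  intro m
  obtain ⟨h, hh⟩ := m
  induction hh using AddSubgroup.closure_induction with
  | mem x hx =>
    obtain ⟨c, h', rfl⟩ := hx
    obtain ⟨e, he, hec⟩ := HasLocalUnits.exists_unit {c}
    have hc := (hec c (Finset.mem_singleton_self c)).1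
    refine AddSubgroup.subset_closure ⟨e, ⟨c • h', smul_mem_umax c h'⟩, ?_⟩
    refine Subtype.ext ?_
    show c • h' = e • (c • h')
    rw [← LMod.mul_smul', hc]
  | zero =>
    have : (⟨(0 : H), (umax C H).zero_mem⟩ : ↥(umax C H)) = 0 := rfl
    rw [this]; exact AddSubgroup.zero_mem _
  | add x y hx hy ihx ihy =>
    have : (⟨x + y, (umax C H).add_mem hx hy⟩ : ↥(umax C H)) =
        ⟨x, hx⟩ + ⟨y, hy⟩ := rfl
    rw [this]; exact AddSubgroup.add_mem _ ihx ihy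
  | neg x hx ihx =>
    have : (⟨-x, (umax C H).neg_mem hx⟩ : ↥(umax C H)) = -⟨x, hx⟩ := rfl
    rw [this]; exact AddSubgroup.neg_mem _ ihx

end umax

section regular

variable (R : Type u) [NonUnitalRing R]

/-- The left regular module structure of a non-unital ring on itself. -/
instance NonUnitalRing.instLModSelf : LMod R R where
  smul := (· * ·)
  smul_add' := mul_add
  add_smul' := add_mul
  mul_smul' := mul_assoc

@[simp] theorem NonUnitalRing.smul_def (r s : R) : r • s = r * s := rfl

/-- The right regular module structure, as a left module over the opposite ring. -/
instance NonUnitalRing.instLModSelfOp : LMod Rᵐᵒᵖ R where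
  smul r s := s * r.unop
  smul_add' r m n := add_mul m n r.unop
  add_smul' r r' m := mul_add m r.unop r'.unop
  mul_smul' r r' m := (mul_assoc m r'.unop r.unop).symm

@[simp] theorem NonUnitalRing.op_smul_def (r : Rᵐᵒᵖ) (s : R) : r • s = s * r.unop := rfl

instance : SMulCommClass R Rᵐᵒᵖ R :=
  ⟨fun r s x => by
    show r * (x * s.unop) = (r * x) * s.unop
    rw [mul_assoc]⟩

/-- Local units pass to the opposite ring. -/
instance instHasLocalUnitsOp [HasLocalUnits R] : HasLocalUnits Rᵐᵒᵖ where
  exists_unit s := by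
    classical
    obtain ⟨e, he, h⟩ := HasLocalUnits.exists_unit (R := R) (s.image MulOpposite.unop)
    refine ⟨MulOpposite.op e, by rw [← MulOpposite.op_mul, he], fun x hx => ?_⟩
    have hx' := h x.unop (Finset.mem_image_of_mem MulOpposite.unop hx)
    constructor
    · conv_lhs => rw [← MulOpposite.op_unop x, ← MulOpposite.op_mul, hx'.2, MulOpposite.op_unop]
    · conv_lhs => rw [← MulOpposite.op_unop x, ← MulOpposite.op_mul, hx'.1, MulOpposite.op_unop]

end regular

section homact

variable {A B C : Type u} [NonUnitalRing A] [NonUnitalRing B] [NonUnitalRing C]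
variable {X : Type v} {Y : Type w} [AddCommGroup X] [AddCommGroup Y] [LMod B X] [LMod B Y]

/-- The action of `A` on `Hom_B(X, Y)` by precomposition with the right
`A`-action on `X` (homomorphisms written on the right: `(a • f) x = f (x·a)`). -/
instance LinMap.instLModPre [LMod Aᵐᵒᵖ X] [SMulCommClass B Aᵐᵒᵖ X] :
    LMod A (LinMap B X Y) where
  smul a f := ⟨fun x => f.1 (op a • x),
    ⟨fun x y => by rw [LMod.smul_add', f.2.map_add],
     fun r x => by rw [← smul_comm r (op a) x, f.2.map_smul]⟩⟩
  smul_add' a f g := LinMap.ext rfl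
  add_smul' a a' f := LinMap.ext (funext fun x => by
    show f.1 (op (a + a') • x) = f.1 (op a • x) + f.1 (op a' • x)
    rw [← f.2.map_add, ← LMod.add_smul']
    rfl)
  mul_smul' a a' f := LinMap.ext (funext fun x => by
    show f.1 (op (a * a') • x) = f.1 (op a' • (op a • x))
    rw [← LMod.mul_smul']
    rfl)

theorem LinMap.pre_smul_apply [LMod Aᵐᵒᵖ X] [SMulCommClass B Aᵐᵒᵖ X]
    (a : A) (f : LinMap B X Y) (x : X) : (a • f).1 x = f.1 (op a • x) := rfl

/-- The action of `C` on `Hom_B(X, Y)` by postcomposition with a commuting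
`C`-action on `Y`. -/
instance LinMap.instLModPost [LMod C Y] [SMulCommClass B C Y] :
    LMod C (LinMap B X Y) where
  smul c f := ⟨fun x => c • f.1 x,
    ⟨fun x y => by rw [f.2.map_add, LMod.smul_add'],
     fun r x => by rw [f.2.map_smul]; exact (smul_comm r c (f.1 x)).symm⟩⟩
  smul_add' c f g := LinMap.ext (funext fun x => LMod.smul_add' c (f.1 x) (g.1 x))
  add_smul' c c' f := LinMap.ext (funext fun x => LMod.add_smul' c c' (f.1 x))
  mul_smul' c c' f := LinMap.ext (funext fun x => LMod.mul_smul' c c' (f.1 x))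

theorem LinMap.post_smul_apply [LMod C Y] [SMulCommClass B C Y]
    (c : C) (f : LinMap B X Y) (x : X) : (c • f).1 x = c • (f.1 x) := rfl

/-- Pre- and postcomposition actions on hom-groups commute. -/
instance LinMap.instSMulCommClassPrePost [LMod Aᵐᵒᵖ X] [SMulCommClass B Aᵐᵒᵖ X]
    [LMod C Y] [SMulCommClass B C Y] : SMulCommClass A C (LinMap B X Y) :=
  ⟨fun a c f => LinMap.ext rfl⟩

end homact
/-! ### Split direct systems and direct limits of unitary modules -/

section dirsys

variable (R : Type u) [NonUnitalRing R]

/-- A split direct system of unitary left `R`-modules, indexed by a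
quasi-ordered set `(ι, rel)`: a direct system `(P_i, φ_{ij})` together with
splittings `ψ_{ji} : P_j → P_i` (for `i ≤ j`) such that `φ_{ij} ψ_{ji} = id`
and `ψ_{kj} ψ_{ji} = ψ_{ki}`. -/
structure SplitSystem (ι : Type w) (rel : ι → ι → Prop) : Type (max u w (v + 1)) where
  obj : ι → UMod.{u, v} R
  map : ∀ {i j : ι}, rel i j → (obj i ⟶ obj j)
  split : ∀ {i j : ι}, rel i j → (obj j ⟶ obj i)
  map_self : ∀ {i : ι} (h : rel i i) (x : (obj i).carrier), (map h).1 x = x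
  map_map : ∀ {i j k : ι} (hij : rel i j) (hjk : rel j k) (hik : rel i k)
    (x : (obj i).carrier), (map hjk).1 ((map hij).1 x) = (map hik).1 x
  split_map : ∀ {i j : ι} (h : rel i j) (x : (obj i).carrier),
    (split h).1 ((map h).1 x) = x
  split_split : ∀ {i j k : ι} (hij : rel i j) (hjk : rel j k) (hik : rel i k)
    (x : (obj k).carrier), (split hij).1 ((split hjk).1 x) = (split hik).1 x

/-- `P`, together with homomorphisms `φ_i : P_i → P`, is a direct limit of the
direct system `(P_i, φ_{ij})` (with directed index set): the `φ_i` are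
compatible, every element of `P` comes from some `P_i`, and everything killed
by `φ_i` is eventually killed in the system. -/
structure LimitCocone {ι : Type w} {rel : ι → ι → Prop} (D : SplitSystem.{u, v} R ι rel)
    (P : Type v) [AddCommGroup P] [LMod R P] : Type (max u w v) where
  incl : ∀ i, LinMap R (D.obj i).carrier P
  compat : ∀ {i j : ι} (h : rel i j) (x : (D.obj i).carrier),
    (incl j).1 ((D.map h).1 x) = (incl i).1 x
  exhaustive : ∀ x : P, ∃ (i : ι) (y : (D.obj i).carrier), (incl i).1 y = x
  eventually_zero : ∀ i (y : (D.obj i).carrier), (incl i).1 y = 0 →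
    ∃ j, ∃ h : rel i j, (D.map h).1 y = 0

/-- A unitary left `R`-module is locally projective if it is a direct limit of a
split direct system of finitely generated projective unitary left `R`-modules. -/
def IsLocallyProjective (P : Type v) [AddCommGroup P] [LMod R P] : Prop :=
  ∃ (ι : Type v) (rel : ι → ι → Prop),
    (∀ i, rel i i) ∧ (∀ {i j k}, rel i j → rel j k → rel i k) ∧
    Nonempty ι ∧ (∀ i j, ∃ k, rel i k ∧ rel j k) ∧
    ∃ (D : SplitSystem.{u, v} R ι rel) (_ : LimitCocone R D P),
      ∀ i, IsFG R (D.obj i).carrier ∧ CategoryTheory.Projective (D.obj i)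

variable {R}

/-- The transition maps `Ω_{ij} : End_R(P_i) → End_R(P_j)`, `α ↦ ψ_{ji} α φ_{ij}`,
of the direct system of endomorphism rings associated to a split direct system. -/
def SplitSystem.endTrans {ι : Type w} {rel : ι → ι → Prop}
    (D : SplitSystem.{u, v} R ι rel) {i j : ι} (h : rel i j)
    (a : LinMap R (D.obj i).carrier (D.obj i).carrier) :
    LinMap R (D.obj j).carrier (D.obj j).carrier :=
  ⟨fun x => (D.map h).1 (a.1 ((D.split h).1 x)),
   ⟨fun x y => by rw [(D.split h).2.map_add, a.2.map_add, (D.map h).2.map_add],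
    fun r x => by rw [(D.split h).2.map_smul, a.2.map_smul, (D.map h).2.map_smul]⟩⟩

end dirsys
/-! ### The functor `SHom_R(P,−)` and related constructions for a bimodule `P` -/

section shom

variable (R S : Type u) [NonUnitalRing R] [NonUnitalRing S]
variable (P : Type u) [AddCommGroup P] [LMod R P] [LMod Sᵐᵒᵖ P] [SMulCommClass R Sᵐᵒᵖ P]

/-- `SHom_R(P,M) = S·Hom_R(P,M)`, the largest unitary left `S`-submodule of
`Hom_R(P,M)`, as a type. -/
abbrev SHom (M : Type u) [AddCommGroup M] [LMod R M] : Type u :=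
  ↥(umax S (LinMap R P M))

variable {R S P}

/-- The action of `SHom_R(P,−)` on a homomorphism `g : M → N` (postcomposition). -/
def sHomMap {M N : Type u} [AddCommGroup M] [AddCommGroup N] [LMod R M] [LMod R N]
    (g : LinMap R M N) (α : SHom R S P M) : SHom R S P N :=
  ⟨⟨fun x => g.1 (α.1.1 x),
    ⟨fun x y => by rw [α.1.2.map_add, g.2.map_add],
     fun r x => by rw [α.1.2.map_smul, g.2.map_smul]⟩⟩,
   umax_mapsTo (C := S)
     (fun f => ⟨fun x => g.1 (f.1 x),
       ⟨fun x y => by rw [f.2.map_add, g.2.map_add],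
        fun r x => by rw [f.2.map_smul, g.2.map_smul]⟩⟩)
     (fun f f' => LinMap.ext (funext fun x => g.2.map_add _ _))
     (fun s f => LinMap.ext rfl) α.2⟩

theorem sHomMap_apply {M N : Type u} [AddCommGroup M] [AddCommGroup N] [LMod R M]
    [LMod R N] (g : LinMap R M N) (α : SHom R S P M) (x : P) :
    ((sHomMap g α).1).1 x = g.1 (α.1.1 x) := rfl

theorem sHomMap_add {M N : Type u} [AddCommGroup M] [AddCommGroup N] [LMod R M]
    [LMod R N] (g : LinMap R M N) (α β : SHom R S P M) :
    sHomMap g (α + β) = sHomMap g α + sHomMap g β :=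
  Subtype.ext (LinMap.ext (funext fun x =>
    show g.1 (α.1.1 x + β.1.1 x) = g.1 (α.1.1 x) + g.1 (β.1.1 x) from g.2.map_add _ _))

theorem sHomMap_smul {M N : Type u} [AddCommGroup M] [AddCommGroup N] [LMod R M]
    [LMod R N] (g : LinMap R M N) (s : S) (α : SHom R S P M) :
    sHomMap g (s • α) = s • sHomMap g α :=
  Subtype.ext (LinMap.ext (funext fun x => rfl))

/-- `SHom_R(P,g)` as a homomorphism of `S`-modules. -/
def sHomLin {M N : Type u} [AddCommGroup M] [AddCommGroup N] [LMod R M] [LMod R N]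
    (g : LinMap R M N) : LinMap S (SHom R S P M) (SHom R S P N) :=
  ⟨sHomMap g, ⟨sHomMap_add g, fun s α => sHomMap_smul g s α⟩⟩

variable (R S P)

/-- The functor `SHom_R(P,−)` from unitary left `R`-modules to unitary left
`S`-modules. -/
def sHomF [HasLocalUnits S] : UMod.{u, u} R ⥤ UMod.{u, u} S where
  obj M := ⟨SHom R S P M.carrier, umax_unitary⟩
  map g := sHomLin g
  map_id M := LinMap.ext (funext fun α => Subtype.ext (LinMap.ext (funext fun x => rfl)))
  map_comp f g := LinMap.ext (funext fun α => Subtype.ext (LinMap.ext (funext fun x => rfl)))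

/-- `G_P = SHom_R(P,R)`, an `S`-`R`-bimodule. -/
abbrev GP : Type u := ↥(umax S (LinMap R P R))

/-- `RHom_S(G_P, N) = R·Hom_S(G_P, N)`, as a type. -/
abbrev RHomG (N : Type u) [AddCommGroup N] [LMod S N] : Type u :=
  ↥(umax R (LinMap S (GP R S P) N))

variable {R S P}

/-- The action of `RHom_S(G_P,−)` on a homomorphism of `S`-modules. -/
def rHomGMap {N N' : Type u} [AddCommGroup N] [AddCommGroup N'] [LMod S N] [LMod S N']
    (g : LinMap S N N') (α : RHomG R S P N) : RHomG R S P N' :=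
  ⟨⟨fun β => g.1 (α.1.1 β),
    ⟨fun x y => by rw [α.1.2.map_add, g.2.map_add],
     fun s x => by rw [α.1.2.map_smul, g.2.map_smul]⟩⟩,
   umax_mapsTo (C := R)
     (fun f => ⟨fun β => g.1 (f.1 β),
       ⟨fun x y => by rw [f.2.map_add, g.2.map_add],
        fun s x => by rw [f.2.map_smul, g.2.map_smul]⟩⟩)
     (fun f f' => LinMap.ext (funext fun β => g.2.map_add _ _))
     (fun r f => LinMap.ext rfl) α.2⟩

variable (R S P)

/-- The functor `RHom_S(G_P,−)` from unitary left `S`-modules to unitary left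
`R`-modules. -/
def rHomGF [HasLocalUnits R] : UMod.{u, u} S ⥤ UMod.{u, u} R where
  obj N := ⟨RHomG R S P N.carrier, umax_unitary⟩
  map g := ⟨rHomGMap g,
    ⟨fun α β => Subtype.ext (LinMap.ext (funext fun x =>
       show g.1 (α.1.1 x + β.1.1 x) = g.1 (α.1.1 x) + g.1 (β.1.1 x) from g.2.map_add _ _)),
     fun r α => Subtype.ext (LinMap.ext (funext fun x => rfl))⟩⟩
  map_id N := LinMap.ext (funext fun α => Subtype.ext (LinMap.ext (funext fun x => rfl)))
  map_comp f g := LinMap.ext (funext fun α => Subtype.ext (LinMap.ext (funext fun x => rfl)))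

variable {R S P}

/-- The inner component of the evaluation map `γ`: for `n ∈ N` and
`β ∈ Hom_R(P,R)`, the homomorphism `P → N`, `x ↦ (x)β·n`. -/
def gammaInner {N : Type u} [AddCommGroup N] [LMod R N] (n : N) (β : LinMap R P R) :
    LinMap R P N :=
  ⟨fun x => (β.1 x) • n,
   ⟨fun x y => by rw [β.2.map_add, LMod.add_smul'],
    fun r x => by rw [β.2.map_smul, NonUnitalRing.smul_def, LMod.mul_smul']⟩⟩

theorem gammaInner_mem {N : Type u} [AddCommGroup N] [LMod R N] (n : N)
    {β : LinMap R P R} (hβ : β ∈ umax S (LinMap R P R)) :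
    gammaInner n β ∈ umax S (LinMap R P N) :=
  umax_mapsTo (C := S) (fun β => gammaInner n β)
    (fun β β' => LinMap.ext (funext fun x => LMod.add_smul' _ _ _))
    (fun s β => LinMap.ext rfl) hβ

variable (R S P)

/-- The evaluation map `γ_N : N → RHom_S(G_P, SHom_R(P,N))` (before checking that
its values lie in the unitary part `R·Hom_S(G_P, SHom_R(P,N))`):
`n ↦ (β ↦ (x ↦ (x)β·n))`. -/
def gammaFun (N : Type u) [AddCommGroup N] [LMod R N] (n : N) :
    LinMap S (GP R S P) (SHom R S P N) :=
  ⟨fun β => ⟨gammaInner n β.1, gammaInner_mem n β.2⟩,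
   ⟨fun β β' => Subtype.ext (LinMap.ext (funext fun x => LMod.add_smul' _ _ _)),
    fun s β => Subtype.ext (LinMap.ext rfl)⟩⟩

/-- The `s`-trace `sTr(P,M) = Σ_{g ∈ SHom_R(P,M)} Im g` of `P` in `M`. -/
def sTrSub (M : Type u) [AddCommGroup M] [LMod R M] : AddSubgroup M :=
  AddSubgroup.closure {m : M | ∃ f : LinMap R P M, f ∈ umax S (LinMap R P M) ∧ ∃ x : P, m = f.1 x}

/-- `st_P(M) = 0`: the only `R`-submodule `K ⊆ M` with `SHom_R(P,K) = 0` is the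
zero submodule (equivalently, the sum of all such submodules is zero). -/
def stPZero (M : Type u) [AddCommGroup M] [LMod R M] : Prop :=
  ∀ K : AddSubgroup M, (∀ (r : R) (x : M), x ∈ K → r • x ∈ K) →
    (∀ (s : S) (f : LinMap R P M), (∀ x : P, f.1 x ∈ K) → s • f = 0) →
    ∀ m ∈ K, m = 0

/-- `SHom_R(P,X) = 0`. -/
def sHomZero (X : Type u) [AddCommGroup X] [LMod R X] : Prop :=
  ∀ f : LinMap R P X, f ∈ umax S (LinMap R P X) → f = 0

end shom
/-! ### Bimodules, dual hom functors, reflexivity, Morita duality bimodules,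
finiteness conditions -/

section bimod

variable (R S : Type u) [NonUnitalRing R] [NonUnitalRing S]

/-- A bundled `R`-`S`-bimodule over non-unital rings. -/
structure BimodLU : Type (u + 1) where
  carrier : Type u
  [grp : AddCommGroup carrier]
  [lmod : LMod R carrier]
  [rmod : LMod Sᵐᵒᵖ carrier]
  [comm : SMulCommClass R Sᵐᵒᵖ carrier]
  [comm' : SMulCommClass Sᵐᵒᵖ R carrier]

attribute [instance] BimodLU.grp BimodLU.lmod BimodLU.rmod BimodLU.comm BimodLU.comm'

variable (U : Type u) [AddCommGroup U] [LMod R U] [LMod Sᵐᵒᵖ U] [SMulCommClass R Sᵐᵒᵖ U]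
  [SMulCommClass Sᵐᵒᵖ R U]

/-- The canonical map `μ : S → End_R(U)`, `s ↦ (x ↦ x·s)`. -/
def muMap (s : S) : LinMap R U U :=
  ⟨fun x => op s • x,
   ⟨fun x y => LMod.smul_add' (op s) x y, fun r x => (smul_comm r (op s) x).symm⟩⟩

/-- The canonical map `λ : R → End_S(U)`, `r ↦ (x ↦ r·x)`. -/
def lambdaMap (r : R) : LinMap Sᵐᵒᵖ U U :=
  ⟨fun x => r • x,
   ⟨fun x y => LMod.smul_add' r x y, fun s x => smul_comm r s x⟩⟩

/-- `Hom_R(M,U)S`, the largest unitary right `S`-submodule of `Hom_R(M,U)`,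
as a type (a right `S`-module, i.e. a left `Sᵐᵒᵖ`-module). -/
abbrev DHomL (M : Type u) [AddCommGroup M] [LMod R M] : Type u :=
  ↥(umax Sᵐᵒᵖ (LinMap R M U))

/-- `RHom_S(N,U)`, the largest unitary left `R`-submodule of `Hom_S(N,U)`
for a right `S`-module `N`, as a type. -/
abbrev DHomR (N : Type u) [AddCommGroup N] [LMod Sᵐᵒᵖ N] : Type u :=
  ↥(umax R (LinMap Sᵐᵒᵖ N U))

variable {R S U}

/-- Action of the contravariant functor `Hom_R(−,U)S` on morphisms
(precomposition). -/
def dHomLMap {M N : Type u} [AddCommGroup M] [AddCommGroup N] [LMod R M] [LMod R N]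
    (f : LinMap R M N) (α : DHomL R S U N) : DHomL R S U M :=
  ⟨⟨fun x => α.1.1 (f.1 x),
    ⟨fun x y => by rw [f.2.map_add, α.1.2.map_add],
     fun r x => by rw [f.2.map_smul, α.1.2.map_smul]⟩⟩,
   umax_mapsTo (C := Sᵐᵒᵖ)
     (fun g => ⟨fun x => g.1 (f.1 x),
       ⟨fun x y => by rw [f.2.map_add, g.2.map_add],
        fun r x => by rw [f.2.map_smul, g.2.map_smul]⟩⟩)
     (fun g g' => LinMap.ext rfl) (fun s g => LinMap.ext rfl) α.2⟩

/-- Action of the contravariant functor `RHom_S(−,U)` on morphisms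
(precomposition). -/
def dHomRMap {M N : Type u} [AddCommGroup M] [AddCommGroup N] [LMod Sᵐᵒᵖ M]
    [LMod Sᵐᵒᵖ N] (f : LinMap Sᵐᵒᵖ M N) (α : DHomR R S U N) : DHomR R S U M :=
  ⟨⟨fun x => α.1.1 (f.1 x),
    ⟨fun x y => by rw [f.2.map_add, α.1.2.map_add],
     fun s x => by rw [f.2.map_smul, α.1.2.map_smul]⟩⟩,
   umax_mapsTo (C := R)
     (fun g => ⟨fun x => g.1 (f.1 x),
       ⟨fun x y => by rw [f.2.map_add, g.2.map_add],
        fun s x => by rw [f.2.map_smul, g.2.map_smul]⟩⟩)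
     (fun g g' => LinMap.ext rfl) (fun r g => LinMap.ext rfl) α.2⟩

variable (R S U)

/-- The contravariant functor `Hom_R(−,U)S` from unitary left `R`-modules to
unitary right `S`-modules. -/
def dualL [HasLocalUnits S] : (UMod.{u, u} R)ᵒᵖ ⥤ UMod.{u, u} Sᵐᵒᵖ where
  obj M := ⟨DHomL R S U M.unop.carrier, umax_unitary⟩
  map f := ⟨dHomLMap f.unop,
    ⟨fun α β => Subtype.ext (LinMap.ext (funext fun x => rfl)),
     fun s α => Subtype.ext (LinMap.ext (funext fun x => rfl))⟩⟩
  map_id M := LinMap.ext (funext fun α => Subtype.ext (LinMap.ext (funext fun x => rfl)))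
  map_comp f g := LinMap.ext (funext fun α => Subtype.ext (LinMap.ext (funext fun x => rfl)))

/-- The contravariant functor `RHom_S(−,U)` from unitary right `S`-modules to
unitary left `R`-modules. -/
def dualR [HasLocalUnits R] : (UMod.{u, u} Sᵐᵒᵖ)ᵒᵖ ⥤ UMod.{u, u} R where
  obj N := ⟨DHomR R S U N.unop.carrier, umax_unitary⟩
  map f := ⟨dHomRMap f.unop,
    ⟨fun α β => Subtype.ext (LinMap.ext (funext fun x => rfl)),
     fun r α => Subtype.ext (LinMap.ext (funext fun x => rfl))⟩⟩
  map_id N := LinMap.ext (funext fun α => Subtype.ext (LinMap.ext (funext fun x => rfl)))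
  map_comp f g := LinMap.ext (funext fun α => Subtype.ext (LinMap.ext (funext fun x => rfl)))

/-- The underlying function of the evaluation map
`φ_X : X → RHom_S(Hom_R(X,U)S, U)`, `(x)φ_X : β ↦ (x)β`. -/
def evalFunL (X : Type u) [AddCommGroup X] [LMod R X] (x : X) :
    LinMap Sᵐᵒᵖ (DHomL R S U X) U :=
  ⟨fun β => β.1.1 x, ⟨fun β β' => rfl, fun s β => rfl⟩⟩

/-- A unitary left `R`-module `X` is `U`-reflexive: the evaluation map
`φ_X : X → RHom_S(Hom_R(X,U)S, U)` is an isomorphism. -/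
def IsLReflexive (X : Type u) [AddCommGroup X] [LMod R X] : Prop :=
  ∃ h : ∀ x : X, evalFunL R S U X x ∈ umax R (LinMap Sᵐᵒᵖ (DHomL R S U X) U),
    Function.Bijective (fun x : X => (⟨evalFunL R S U X x, h x⟩ : DHomR R S U (DHomL R S U X)))

/-- The underlying function of the evaluation map
`ψ_Y : Y → Hom_R(RHom_S(Y,U),U)S`, `ψ_Y(y) : α ↦ α(y)`. -/
def evalFunR (Y : Type u) [AddCommGroup Y] [LMod Sᵐᵒᵖ Y] (y : Y) :
    LinMap R (DHomR R S U Y) U :=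
  ⟨fun α => α.1.1 y, ⟨fun α α' => rfl, fun r α => rfl⟩⟩

/-- A unitary right `S`-module `Y` is `U`-reflexive: the evaluation map
`ψ_Y : Y → Hom_R(RHom_S(Y,U),U)S` is an isomorphism. -/
def IsRReflexive (Y : Type u) [AddCommGroup Y] [LMod Sᵐᵒᵖ Y] : Prop :=
  ∃ h : ∀ y : Y, evalFunR R S U Y y ∈ umax Sᵐᵒᵖ (LinMap R (DHomR R S U Y) U),
    Function.Bijective (fun y : Y => (⟨evalFunR R S U Y y, h y⟩ : DHomL R S U (DHomR R S U Y)))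

/-- Properties (I) and (II) of a Morita duality bimodule: `U` is the direct
limit of a split direct system of finitely generated injective unitary left
`R`-modules whose members form a cogenerating set for the category of unitary
left `R`-modules, and `μ : S → End_R(U)` is a monomorphism whose image is
exactly the set of endomorphisms factoring through one of the induced
projections. -/
def SatisfiesI_II : Prop :=
  ∃ (ι : Type u) (rel : ι → ι → Prop),
    (∀ i, rel i i) ∧ (∀ {i j k}, rel i j → rel j k → rel i k) ∧
    Nonempty ι ∧ (∀ i j, ∃ k, rel i k ∧ rel j k) ∧
    ∃ (D : SplitSystem.{u, u} R ι rel) (c : LimitCocone R D U)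
      (proj : ∀ i, LinMap R U (D.obj i).carrier),
      (∀ i, IsFG R (D.obj i).carrier ∧ CategoryTheory.Injective (D.obj i)) ∧
      IsCogenSet R {M | ∃ i, M = D.obj i} ∧
      (∀ i (x : (D.obj i).carrier), (proj i).1 ((c.incl i).1 x) = x) ∧
      (∀ {i j} (h : rel i j) (x : U), (D.split h).1 ((proj j).1 x) = (proj i).1 x) ∧
      Function.Injective (muMap R S U) ∧
      Set.range (muMap R S U) =
        {g : LinMap R U U | ∃ (i : ι) (γ : LinMap R (D.obj i).carrier U),
          g.1 = fun x => γ.1 ((proj i).1 x)}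

/-- Properties (III) and (IV) of a Morita duality bimodule (the right-module
side, dual to (I) and (II)). -/
def SatisfiesIII_IV : Prop :=
  ∃ (ι : Type u) (rel : ι → ι → Prop),
    (∀ i, rel i i) ∧ (∀ {i j k}, rel i j → rel j k → rel i k) ∧
    Nonempty ι ∧ (∀ i j, ∃ k, rel i k ∧ rel j k) ∧
    ∃ (D : SplitSystem.{u, u} Sᵐᵒᵖ ι rel) (c : LimitCocone Sᵐᵒᵖ D U)
      (proj : ∀ i, LinMap Sᵐᵒᵖ U (D.obj i).carrier),
      (∀ i, IsFG Sᵐᵒᵖ (D.obj i).carrier ∧ CategoryTheory.Injective (D.obj i)) ∧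
      IsCogenSet Sᵐᵒᵖ {M | ∃ i, M = D.obj i} ∧
      (∀ i (x : (D.obj i).carrier), (proj i).1 ((c.incl i).1 x) = x) ∧
      (∀ {i j} (h : rel i j) (x : U), (D.split h).1 ((proj j).1 x) = (proj i).1 x) ∧
      Function.Injective (lambdaMap R S U) ∧
      Set.range (lambdaMap R S U) =
        {g : LinMap Sᵐᵒᵖ U U | ∃ (i : ι) (γ : LinMap Sᵐᵒᵖ (D.obj i).carrier U),
          g.1 = fun x => γ.1 ((proj i).1 x)}

/-- A Morita duality `R`-`S`-bimodule. -/
def IsMoritaDualityBimod : Prop :=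
  IsUnitary R U ∧ IsUnitary Sᵐᵒᵖ U ∧ SatisfiesI_II R S U ∧ SatisfiesIII_IV R S U

end bimod

section cats

variable (R : Type u) [NonUnitalRing R]

/-- The category of finitely generated unitary left `R`-modules. -/
abbrev FGMod := CategoryTheory.ObjectProperty.FullSubcategory (fun M : UMod.{u, u} R => IsFG R M.carrier)

/-- The category of finitely generated injective unitary left `R`-modules. -/
abbrev InjFGMod := CategoryTheory.ObjectProperty.FullSubcategory
  (fun M : UMod.{u, u} R => IsFG R M.carrier ∧ CategoryTheory.Injective M)

/-- The category of finitely generated projective unitary left `R`-modules. -/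
abbrev ProjFGMod := CategoryTheory.ObjectProperty.FullSubcategory
  (fun M : UMod.{u, u} R => IsFG R M.carrier ∧ CategoryTheory.Projective M)

/-- There is a duality (an additive contravariant equivalence) between the
categories of finitely generated unitary left `R`-modules and finitely
generated unitary right `S`-modules. -/
def ExistsFGDuality (R S : Type u) [NonUnitalRing R] [NonUnitalRing S] : Prop :=
  ∃ F : (FGMod R)ᵒᵖ ⥤ FGMod Sᵐᵒᵖ, F.Additive ∧ F.IsEquivalence

/-- Bundled ring with local units. -/
structure RingLU : Type (u + 1) where
  carrier : Type u
  [ring : NonUnitalRing carrier]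
  [lu : HasLocalUnits carrier]

attribute [instance] RingLU.ring RingLU.lu

/-- A ring with local units is left Morita if there is a ring `R'` with local
units and a duality from finitely generated unitary left `R`-modules to
finitely generated unitary right `R'`-modules. -/
def IsLeftMorita : Prop :=
  ∃ R' : RingLU.{u}, ExistsFGDuality R R'.carrier

/-- `R` is left locally finite: every finitely generated unitary left
`R`-module has finite length (equivalently, the lengths of chains of
submodules of such a module are bounded). -/
def IsLeftLocallyFinite : Prop :=
  ∀ (M : Type u) [AddCommGroup M] [LMod R M], IsUnitary R M → IsFG R M →
    ∃ n : ℕ, ∀ c : Fin (n + 1) → AddSubgroup M,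
      (∀ i (r : R) x, x ∈ c i → r • x ∈ c i) →
      ¬(∀ i : Fin n, c i.castSucc < c i.succ)

/-- `R` is left locally noetherian: every finitely generated unitary left
`R`-module is noetherian. -/
def IsLeftLocallyNoetherian : Prop :=
  ∀ (M : Type u) [AddCommGroup M] [LMod R M], IsUnitary R M → IsFG R M →
    ∀ c : ℕ → AddSubgroup M, (∀ i (r : R) x, x ∈ c i → r • x ∈ c i) →
      (∀ i, c i ≤ c (i + 1)) → ∃ n, ∀ m, n ≤ m → c m = c n

end cats

section principal

variable (R : Type u) [NonUnitalRing R]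

/-- The principal left ideal `Re` of a non-unital ring, for an element `e`. -/
def principalLeft (e : R) : AddSubgroup R where
  carrier := {y : R | ∃ r : R, y = r * e}
  add_mem' := by
    rintro a b ⟨r, hr⟩ ⟨s, hs⟩
    exact ⟨r + s, by rw [hr, hs, add_mul]⟩
  zero_mem' := ⟨0, by rw [zero_mul]⟩
  neg_mem' := by
    rintro a ⟨r, hr⟩
    exact ⟨-r, by rw [hr, neg_mul]⟩

instance (e : R) : LMod R ↥(principalLeft R e) where
  smul r y := ⟨r * y.1, by obtain ⟨s, hs⟩ := y.2; exact ⟨r * s, by rw [hs, mul_assoc]⟩⟩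
  smul_add' r m n := Subtype.ext (mul_add r m.1 n.1)
  add_smul' r s m := Subtype.ext (add_mul r s m.1)
  mul_smul' r s m := Subtype.ext (mul_assoc r s m.1)

/-- The principal right ideal `fS` of a non-unital ring, as a right module
(left module over the opposite ring). -/
def principalRight (f : R) : AddSubgroup R where
  carrier := {y : R | ∃ s : R, y = f * s}
  add_mem' := by
    rintro a b ⟨r, hr⟩ ⟨s, hs⟩
    exact ⟨r + s, by rw [hr, hs, mul_add]⟩
  zero_mem' := ⟨0, by rw [mul_zero]⟩
  neg_mem' := by
    rintro a ⟨r, hr⟩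
    exact ⟨-r, by rw [hr, mul_neg]⟩

instance (f : R) : LMod Rᵐᵒᵖ ↥(principalRight R f) where
  smul s y := ⟨y.1 * s.unop, by
    obtain ⟨t, ht⟩ := y.2; exact ⟨t * s.unop, by rw [ht, mul_assoc]⟩⟩
  smul_add' s m n := Subtype.ext (add_mul m.1 n.1 s.unop)
  add_smul' s t m := Subtype.ext (mul_add m.1 s.unop t.unop)
  mul_smul' s t m := Subtype.ext (mul_assoc m.1 t.unop s.unop).symm

end principal

section restr

variable (R S : Type u) [NonUnitalRing R] [NonUnitalRing S] [HasLocalUnits R] [HasLocalUnits S]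
variable (U : Type u) [AddCommGroup U] [LMod R U] [LMod Sᵐᵒᵖ U] [SMulCommClass R Sᵐᵒᵖ U]
  [SMulCommClass Sᵐᵒᵖ R U]

/-- The restriction of the contravariant functor `Hom_R(−,U)S` to finitely
generated modules, given that it preserves finite generation. -/
def dualLRestr (hFG : ∀ X : UMod.{u, u} R, IsFG R X.carrier →
    IsFG Sᵐᵒᵖ ((dualL R S U).obj (Opposite.op X)).carrier) :
    (FGMod R)ᵒᵖ ⥤ FGMod Sᵐᵒᵖ :=
  CategoryTheory.ObjectProperty.lift _
    ((CategoryTheory.ObjectProperty.ι _).op ⋙ dualL R S U)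
    (fun X => hFG X.unop.obj X.unop.property)

/-- The restriction of the contravariant functor `RHom_S(−,U)` to finitely
generated modules, given that it preserves finite generation. -/
def dualRRestr (hFG : ∀ Y : UMod.{u, u} Sᵐᵒᵖ, IsFG Sᵐᵒᵖ Y.carrier →
    IsFG R ((dualR R S U).obj (Opposite.op Y)).carrier) :
    (FGMod Sᵐᵒᵖ)ᵒᵖ ⥤ FGMod R :=
  CategoryTheory.ObjectProperty.lift _
    ((CategoryTheory.ObjectProperty.ι _).op ⋙ dualR R S U)
    (fun Y => hFG Y.unop.obj Y.unop.property)

end restr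
/-! ### Direct sums of modules over non-unital rings -/

section dfinsupp

variable {R : Type u} [NonUnitalRing R] {ι : Type v} {β : ι → Type w}
  [∀ i, AddCommGroup (β i)] [∀ i, LMod R (β i)]

/-- Pointwise scalar action on a direct sum. -/
def dfinsuppSMul (r : R) (f : Π₀ i, β i) : Π₀ i, β i :=
  f.mapRange (fun _ x => r • x) (fun _ => LMod.smul_zero' r)

theorem dfinsuppSMul_apply (r : R) (f : Π₀ i, β i) (i : ι) :
    dfinsuppSMul r f i = r • f i := DFinsupp.mapRange_apply _ _ f i

instance DFinsupp.instLMod : LMod R (Π₀ i, β i) where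
  smul := dfinsuppSMul
  smul_add' r f g := by
    ext i
    show dfinsuppSMul r (f + g) i = (dfinsuppSMul r f + dfinsuppSMul r g) i
    rw [DFinsupp.add_apply, dfinsuppSMul_apply, dfinsuppSMul_apply, dfinsuppSMul_apply,
      DFinsupp.add_apply]
    exact LMod.smul_add' r (f i) (g i)
  add_smul' r s f := by
    ext i
    show dfinsuppSMul (r + s) f i = (dfinsuppSMul r f + dfinsuppSMul s f) i
    rw [DFinsupp.add_apply, dfinsuppSMul_apply, dfinsuppSMul_apply, dfinsuppSMul_apply]
    exact LMod.add_smul' r s (f i)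
  mul_smul' r s f := by
    ext i
    show dfinsuppSMul (r * s) f i = dfinsuppSMul r (dfinsuppSMul s f) i
    rw [dfinsuppSMul_apply, dfinsuppSMul_apply, dfinsuppSMul_apply]
    exact LMod.mul_smul' r s (f i)

@[simp] theorem DFinsupp.lmod_smul_apply (r : R) (f : Π₀ i, β i) (i : ι) :
    (r • f) i = r • f i := dfinsuppSMul_apply r f i

end dfinsupp
/-! ### Miscellaneous helpers: submodule stability, `Pf`, traces, sums -/

section extra

variable {R : Type u} [NonUnitalRing R] {M : Type v} [AddCommGroup M] [LMod R M]

theorem closure_smul_stable {s : Set M}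
    (h : ∀ (r : R) (x : M), x ∈ s → r • x ∈ AddSubgroup.closure s) (r : R) {x : M}
    (hx : x ∈ AddSubgroup.closure s) : r • x ∈ AddSubgroup.closure s := by
  induction hx using AddSubgroup.closure_induction with
  | mem y hy => exact h r y hy
  | zero => rw [LMod.smul_zero']; exact AddSubgroup.zero_mem _
  | add y z hy hz ihy ihz => rw [LMod.smul_add']; exact AddSubgroup.add_mem _ ihy ihz
  | neg y hy ihy => rw [LMod.smul_neg']; exact AddSubgroup.neg_mem _ ihy

end extra

section pe

variable (R S : Type u) [NonUnitalRing R] [NonUnitalRing S]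
variable (P : Type u) [AddCommGroup P] [LMod R P] [LMod Sᵐᵒᵖ P] [SMulCommClass R Sᵐᵒᵖ P]

/-- The submodule `Pf = {x·f | x ∈ P}` of `P`, for `f ∈ S`. -/
def peSub (f : S) : AddSubgroup P where
  carrier := Set.range (fun x : P => (op f : Sᵐᵒᵖ) • x)
  add_mem' := by
    rintro a b ⟨x, rfl⟩ ⟨y, rfl⟩
    exact ⟨x + y, LMod.smul_add' (op f) x y⟩
  zero_mem' := ⟨0, LMod.smul_zero' _⟩
  neg_mem' := by
    rintro a ⟨x, rfl⟩
    exact ⟨-x, LMod.smul_neg' (op f) x⟩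

instance (f : S) : LMod R ↥(peSub S P f) where
  smul r y := ⟨r • y.1, by
    obtain ⟨x, hx⟩ := y.2
    exact ⟨r • x, by rw [← hx, smul_comm]⟩⟩
  smul_add' r m n := Subtype.ext (LMod.smul_add' r m.1 n.1)
  add_smul' r s m := Subtype.ext (LMod.add_smul' r s m.1)
  mul_smul' r s m := Subtype.ext (LMod.mul_smul' r s m.1)

variable {R S P} in
theorem sTrSub_smul_stable {M : Type u} [AddCommGroup M] [LMod R M] (r : R) {m : M}
    (hm : m ∈ sTrSub R S P M) : r • m ∈ sTrSub R S P M := by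
  refine closure_smul_stable (fun r' x hx => ?_) r hm
  obtain ⟨g, hg, y, rfl⟩ := hx
  exact AddSubgroup.subset_closure ⟨g, hg, r' • y, (g.2.map_smul r' y).symm⟩

instance (M : Type u) [AddCommGroup M] [LMod R M] : LMod R ↥(sTrSub R S P M) where
  smul r y := ⟨r • y.1, sTrSub_smul_stable r y.2⟩
  smul_add' r m n := Subtype.ext (LMod.smul_add' r m.1 n.1)
  add_smul' r s m := Subtype.ext (LMod.add_smul' r s m.1)
  mul_smul' r s m := Subtype.ext (LMod.mul_smul' r s m.1)

end pe

section sum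

/-- Summation over a direct sum against a family of additive maps
(the canonical map `⊕_I M_i → N`). -/
noncomputable def dfinsuppSum {ι : Type u} {β : ι → Type v} [∀ i, AddCommGroup (β i)]
    {γ : Type w} [AddCommGroup γ] (f : ∀ i, β i →+ γ) (x : Π₀ i, β i) : γ :=
  letI := Classical.decEq ι
  DFinsupp.sumAddHom f x

end sum

/-! ### Auxiliary lemmas for the proof -/

section auxbasic
variable {R : Type u} [NonUnitalRing R] {M : Type v} [AddCommGroup M] [LMod R M]

theorem LMod.neg_smul' (r : R) (m : M) : (-r) • m = -(r • m) := by
  have h : r • m + (-r) • m = 0 := by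
    rw [← LMod.add_smul', add_neg_cancel, LMod.zero_smul']
  exact eq_neg_of_add_eq_zero_right h

theorem LMod.smul_sub' (r : R) (m n : M) : r • (m - n) = r • m - r • n := by
  rw [sub_eq_add_neg, sub_eq_add_neg, LMod.smul_add', LMod.smul_neg']

theorem LMod.smul_finset_sum {ι : Type w} (r : R) (A : Finset ι) (f : ι → M) :
    r • (∑ t ∈ A, f t) = ∑ t ∈ A, r • f t := by
  classical
  induction A using Finset.induction with
  | empty => simp [LMod.smul_zero']
  | insert a s hx ih =>
    rw [Finset.sum_insert hx, Finset.sum_insert hx, LMod.smul_add', ih]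

theorem IsLHom.map_finset_sum {N : Type w} [AddCommGroup N] [LMod R N] {f : M → N}
    (hf : IsLHom R f) {ι : Type u} (A : Finset ι) (g : ι → M) :
    f (∑ t ∈ A, g t) = ∑ t ∈ A, f (g t) := by
  classical
  induction A using Finset.induction with
  | empty => simpa using hf.map_zero
  | insert a s hx ih =>
    rw [Finset.sum_insert hx, Finset.sum_insert hx, hf.map_add, ih]

/-- If `r • v ∈ Q` for all generators `v` of a closure, then `r • m ∈ Q` for all
`m` in the closure. -/
theorem smul_mem_of_closure {X : Set M} {Q : AddSubgroup M} (r : R)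
    (h : ∀ v ∈ X, r • v ∈ Q) {m : M} (hm : m ∈ AddSubgroup.closure X) : r • m ∈ Q := by
  induction hm using AddSubgroup.closure_induction with
  | mem y hy => exact h y hy
  | zero => rw [LMod.smul_zero']; exact Q.zero_mem
  | add y z hy hz ihy ihz => rw [LMod.smul_add']; exact Q.add_mem ihy ihz
  | neg y hy ihy => rw [LMod.smul_neg']; exact Q.neg_mem ihy

/-- An `R`-stable additive subgroup is an `R`-module. -/
def subLMod (K : AddSubgroup M) (hK : ∀ (r : R) (x : M), x ∈ K → r • x ∈ K) :
    LMod R ↥K where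
  smul r y := ⟨r • y.1, hK r y.1 y.2⟩
  smul_add' r m n := Subtype.ext (LMod.smul_add' r m.1 n.1)
  add_smul' r s m := Subtype.ext (LMod.add_smul' r s m.1)
  mul_smul' r s m := Subtype.ext (LMod.mul_smul' r s m.1)

/-- Pointwise module structure on pi types. -/
instance Pi.instLMod {ι : Type w} {β : ι → Type v} [∀ i, AddCommGroup (β i)]
    [∀ i, LMod R (β i)] : LMod R (∀ i, β i) where
  smul r f i := r • f i
  smul_add' r f g := funext fun i => LMod.smul_add' r (f i) (g i)
  add_smul' r s f := funext fun i => LMod.add_smul' r s (f i)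
  mul_smul' r s f := funext fun i => LMod.mul_smul' r s (f i)

@[simp] theorem Pi.lmod_smul_apply {ι : Type w} {β : ι → Type v}
    [∀ i, AddCommGroup (β i)] [∀ i, LMod R (β i)] (r : R) (f : ∀ i, β i) (i : ι) :
    (r • f) i = r • f i := rfl

end auxbasic
section retraction

variable {R : Type u} [NonUnitalRing R] {ι : Type w} {rel : ι → ι → Prop}
variable {D : SplitSystem.{u, v} R ι rel} {P : Type v} [AddCommGroup P] [LMod R P]

theorem IsLHom.map_sub {A : Type v} {B : Type w} [AddCommGroup A] [AddCommGroup B]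
    [LMod R A] [LMod R B] {f : A → B} (hf : IsLHom R f) (x y : A) :
    f (x - y) = f x - f y := by
  rw [sub_eq_add_neg, sub_eq_add_neg, hf.map_add, hf.map_neg]

theorem SplitSystem.split_id {i : ι} (h : rel i i) (x : (D.obj i).carrier) :
    (D.split h).1 x = x := by
  have h2 := D.split_map h x
  rwa [D.map_self] at h2

theorem SplitSystem.split_comp_map {i j k : ι} (hij : rel i j) (hjk : rel j k)
    (hik : rel i k) (y : (D.obj j).carrier) :
    (D.split hik).1 ((D.map hjk).1 y) = (D.split hij).1 y := by
  rw [← D.split_split hij hjk hik, D.split_map]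

theorem split_welldef (htrans : ∀ {i j k}, rel i j → rel j k → rel i k)
    (hdir : ∀ i j, ∃ k, rel i k ∧ rel j k) (c : LimitCocone R D P)
    {i j j' : ι} (hij : rel i j) (hij' : rel i j')
    (y : (D.obj j).carrier) (y' : (D.obj j').carrier)
    (h : (c.incl j).1 y = (c.incl j').1 y') :
    (D.split hij).1 y = (D.split hij').1 y' := by
  obtain ⟨k, hjk, hj'k⟩ := hdir j j'
  have hd : (c.incl k).1 ((D.map hjk).1 y - (D.map hj'k).1 y') = 0 := by
    rw [(c.incl k).2.map_sub, c.compat hjk y, c.compat hj'k y', h, sub_self]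
  obtain ⟨l, hkl, hl⟩ := c.eventually_zero k _ hd
  rw [(D.map hkl).2.map_sub] at hl
  have heq : (D.map (htrans hjk hkl)).1 y = (D.map (htrans hj'k hkl)).1 y' := by
    have h2 := sub_eq_zero.mp hl
    rwa [D.map_map hjk hkl (htrans hjk hkl), D.map_map hj'k hkl (htrans hj'k hkl)] at h2
  calc (D.split hij).1 y
      = (D.split (htrans hij (htrans hjk hkl))).1 ((D.map (htrans hjk hkl)).1 y) :=
        (D.split_comp_map hij (htrans hjk hkl) _ y).symm
    _ = (D.split (htrans hij' (htrans hj'k hkl))).1 ((D.map (htrans hj'k hkl)).1 y') := by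
        rw [heq]
    _ = (D.split hij').1 y' := D.split_comp_map hij' (htrans hj'k hkl) _ y'

theorem exists_rep (hdir : ∀ i j, ∃ k, rel i k ∧ rel j k) (c : LimitCocone R D P)
    (i : ι) (x : P) : ∃ j, ∃ hij : rel i j, ∃ y, (c.incl j).1 y = x := by
  obtain ⟨j0, y0, hy0⟩ := c.exhaustive x
  obtain ⟨k, hik, hj0k⟩ := hdir i j0
  exact ⟨k, hik, (D.map hj0k).1 y0, by rw [c.compat hj0k y0, hy0]⟩

theorem exists_retraction (htrans : ∀ {i j k}, rel i j → rel j k → rel i k)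
    (hdir : ∀ i j, ∃ k, rel i k ∧ rel j k) (c : LimitCocone R D P) (i : ι) :
    ∃ ρ : LinMap R P (D.obj i).carrier,
      ∀ (x : P) {j} (hij : rel i j) (y : (D.obj j).carrier),
        (c.incl j).1 y = x → ρ.1 x = (D.split hij).1 y := by
  have hex := exists_rep hdir c i
  have char : ∀ (x : P) {j} (hij : rel i j) (y : (D.obj j).carrier),
      (c.incl j).1 y = x →
        (D.split (hex x).choose_spec.choose).1 (hex x).choose_spec.choose_spec.choose
          = (D.split hij).1 y := by
    intro x j hij y hy
    have h0 : (c.incl (hex x).choose).1 (hex x).choose_spec.choose_spec.choose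
        = (c.incl j).1 y :=
      (hex x).choose_spec.choose_spec.choose_spec.trans hy.symm
    exact @split_welldef R _ ι rel D P _ _ (fun {i j k} => htrans) hdir c
      i (hex x).choose j (hex x).choose_spec.choose hij
      (hex x).choose_spec.choose_spec.choose y h0
  refine ⟨⟨fun x =>
    (D.split (hex x).choose_spec.choose).1 (hex x).choose_spec.choose_spec.choose,
    ⟨?_, ?_⟩⟩, char⟩
  · intro a b
    obtain ⟨j, hij, y, hy⟩ := hex a
    obtain ⟨j', hij', y', hy'⟩ := hex b
    obtain ⟨k, hjk, hj'k⟩ := hdir j j'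
    have hk : (c.incl k).1 ((D.map hjk).1 y + (D.map hj'k).1 y') = a + b := by
      rw [(c.incl k).2.map_add, c.compat hjk y, c.compat hj'k y', hy, hy']
    show _ = _
    rw [char (a + b) (htrans hij hjk) _ hk, (D.split (htrans hij hjk)).2.map_add,
      D.split_comp_map hij hjk _, D.split_comp_map hij' hj'k _,
      ← char a hij y hy, ← char b hij' y' hy']
  · intro r a
    obtain ⟨j, hij, y, hy⟩ := hex a
    have hr : (c.incl j).1 (r • y) = r • a := by rw [(c.incl j).2.map_smul, hy]
    show _ = _
    rw [char (r • a) hij (r • y) hr, (D.split hij).2.map_smul, char a hij y hy]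

theorem upper_bound_list (hne : Nonempty ι) (htrans : ∀ {i j k}, rel i j → rel j k → rel i k)
    (hdir : ∀ i j, ∃ k, rel i k ∧ rel j k) (l : List ι) :
    ∃ k, ∀ j ∈ l, rel j k := by
  induction l with
  | nil => exact ⟨hne.some, by simp⟩
  | cons j l ih =>
    obtain ⟨k0, hk0⟩ := ih
    obtain ⟨k, hjk, hk0k⟩ := hdir j k0
    exact ⟨k, by
      intro j' hj'
      rcases List.mem_cons.mp hj' with h | h
      · exact h ▸ hjk
      · exact htrans (hk0 j' h) hk0k⟩

end retraction
section dualbasis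
set_option linter.unusedSectionVars false

theorem AddSubgroup.val_sum {M : Type v} [AddCommGroup M] (K : AddSubgroup M)
    {τ : Type w} (A : Finset τ) (f : τ → ↥K) :
    ((∑ t ∈ A, f t : ↥K) : M) = ∑ t ∈ A, (f t : M) :=
  map_sum K.subtype f A

variable {R : Type u} [NonUnitalRing R] [HasLocalUnits R]
variable {P : Type u} [AddCommGroup P] [LMod R P]
variable {S : NonUnitalSubring (LinMap R P P)}
variable [LMod (↥S)ᵐᵒᵖ P] [SMulCommClass R (↥S)ᵐᵒᵖ P]

/-- Fixed elements of an idempotent. -/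
theorem idem_fix (e : ↥S) (he : e * e = e) {m : P} (hm : m ∈ Set.range (e : LinMap R P P).1) :
    (e : LinMap R P P).1 m = m := by
  obtain ⟨y, rfl⟩ := hm
  have h := congrArg Subtype.val he
  have h2 := congrFun (congrArg Subtype.val h) y
  exact h2

theorem mem_peSub_of (hact : ∀ (s : ↥S) (x : P), (MulOpposite.op s) • x = (s : LinMap R P P).1 x)
    (e : ↥S) (x : P) : (e : LinMap R P P).1 x ∈ peSub ↥S P e :=
  ⟨x, hact e x⟩

theorem peSub_sub_range (hact : ∀ (s : ↥S) (x : P), (MulOpposite.op s) • x = (s : LinMap R P P).1 x)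
    (e : ↥S) {m : P} (hm : m ∈ peSub ↥S P e) : m ∈ Set.range (e : LinMap R P P).1 := by
  obtain ⟨y, hy⟩ := hm
  exact ⟨y, by rw [← hact e y]; exact hy⟩

/-- `Pe` is a unitary module. -/
theorem peSub_unitary (hPu : IsUnitary R P)
    (hact : ∀ (s : ↥S) (x : P), (MulOpposite.op s) • x = (s : LinMap R P P).1 x)
    (e : ↥S) (he : e * e = e) : IsUnitary R ↥(peSub ↥S P e) := by
  intro m
  have key : ∀ v : P, (⟨(e : LinMap R P P).1 v, mem_peSub_of hact e v⟩ : ↥(peSub ↥S P e)) ∈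
      AddSubgroup.closure {x : ↥(peSub ↥S P e) | ∃ (r : R) (n : ↥(peSub ↥S P e)), x = r • n} := by
    intro v
    have hv := hPu v
    induction hv using AddSubgroup.closure_induction with
    | mem y hy =>
      obtain ⟨r, n, rfl⟩ := hy
      refine AddSubgroup.subset_closure ⟨r, ⟨(e : LinMap R P P).1 n, mem_peSub_of hact e n⟩, ?_⟩
      exact Subtype.ext ((e : LinMap R P P).2.map_smul r n)
    | zero =>
      have h0 : (⟨(e : LinMap R P P).1 0, mem_peSub_of hact e 0⟩ : ↥(peSub ↥S P e)) = 0 :=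
        Subtype.ext (e : LinMap R P P).2.map_zero
      rw [h0]; exact AddSubgroup.zero_mem _
    | add y z hy hz ihy ihz =>
      have h0 : (⟨(e : LinMap R P P).1 (y + z), mem_peSub_of hact e (y + z)⟩ : ↥(peSub ↥S P e)) =
          ⟨(e : LinMap R P P).1 y, mem_peSub_of hact e y⟩ +
          ⟨(e : LinMap R P P).1 z, mem_peSub_of hact e z⟩ :=
        Subtype.ext ((e : LinMap R P P).2.map_add y z)
      rw [h0]; exact AddSubgroup.add_mem _ ihy ihz
    | neg y hy ihy =>
      have h0 : (⟨(e : LinMap R P P).1 (-y), mem_peSub_of hact e (-y)⟩ : ↥(peSub ↥S P e)) =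
          -⟨(e : LinMap R P P).1 y, mem_peSub_of hact e y⟩ :=
        Subtype.ext ((e : LinMap R P P).2.map_neg y)
      rw [h0]; exact AddSubgroup.neg_mem _ ihy
  have hm : m = ⟨(e : LinMap R P P).1 m.1, mem_peSub_of hact e m.1⟩ :=
    Subtype.ext (idem_fix e he (peSub_sub_range hact e m.2)).symm
  rw [hm]
  exact key m.1

/-- Finite powers of `R` are unitary. -/
theorem pi_unitary {τ : Type u} [Fintype τ] : IsUnitary R (τ → R) := by
  classical
  intro w
  obtain ⟨e, _, hfix⟩ := HasLocalUnits.exists_unit (Finset.univ.image w)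
  refine AddSubgroup.subset_closure ⟨e, w, ?_⟩
  funext t
  exact ((hfix (w t) (Finset.mem_image_of_mem w (Finset.mem_univ t))).1).symm

theorem regular_unitary : IsUnitary R R := by
  intro r
  obtain ⟨e, _, hfix⟩ := HasLocalUnits.exists_unit {r}
  exact AddSubgroup.subset_closure ⟨e, r, ((hfix r (Finset.mem_singleton_self r)).1).symm⟩

theorem subgroup_unitary (K : AddSubgroup R) (hK : ∀ (r : R) (x : R), x ∈ K → r • x ∈ K) :
    @IsUnitary R _ ↥K _ (subLMod K hK) := by
  letI := subLMod K hK
  intro m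
  obtain ⟨e, _, hfix⟩ := HasLocalUnits.exists_unit {m.1}
  refine AddSubgroup.subset_closure ⟨e, m, Subtype.ext ?_⟩
  exact ((hfix m.1 (Finset.mem_singleton_self m.1)).1).symm


/-- The local dual basis lemma: for every idempotent `e ∈ S` there is a finite
dual basis for `Pe`. -/
theorem dual_basis (hPu : IsUnitary R P) (hlp : IsLocallyProjective R P)
    (hact : ∀ (s : ↥S) (x : P), (MulOpposite.op s) • x = (s : LinMap R P P).1 x)
    (hfg : ∀ f : LinMap R P P, f ∈ S → f * f = f → IsFGSet R (Set.range f.1))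
    (e : ↥S) (he : e * e = e) :
    ∃ (ζ : Finset P) (b : {t // t ∈ ζ} → LinMap R P R),
      (∀ t, b t ∈ umax ↥S (LinMap R P R)) ∧
      ∀ x : P, (e : LinMap R P P).1 x =
        ∑ t : {t // t ∈ ζ}, (b t).1 x • (t : P) := by
  classical
  have hee : (e : LinMap R P P) * (e : LinMap R P P) = (e : LinMap R P P) :=
    congrArg Subtype.val he
  obtain ⟨ζ, hζsub, hζspan⟩ := hfg (e : LinMap R P P) e.2 hee
  obtain ⟨ι, rel, hrefl, htrans, hne, hdir, D, c, hProj⟩ := hlp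
  -- the module `Pe` and the free module `F`
  set Me : AddSubgroup P := peSub ↥S P e with hMe
  let MeObj : UMod.{u, u} R := ⟨↥Me, peSub_unitary hPu hact e he⟩
  let τ : Type u := {t // t ∈ ζ}
  let FObj : UMod.{u, u} R := ⟨τ → R, pi_unitary⟩
  have hgenmem : ∀ t : τ, (t : P) ∈ Me := by
    intro t
    obtain ⟨y, hy⟩ := hζsub t.2
    exact ⟨y, by show MulOpposite.op e • y = (t : P); rw [hact e y]; exact hy⟩
  let gen : τ → ↥Me := fun t => ⟨(t : P), hgenmem t⟩
  -- the canonical surjection θ : F → Pe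
  have hθadd : ∀ w w' : τ → R,
      (∑ t : τ, (w + w') t • gen t) = (∑ t : τ, w t • gen t) + ∑ t : τ, w' t • gen t := by
    intro w w'
    rw [← Finset.sum_add_distrib]
    exact Finset.sum_congr rfl fun t _ => LMod.add_smul' (w t) (w' t) (gen t)
  have hθsmul : ∀ (r : R) (w : τ → R),
      (∑ t : τ, (r • w) t • gen t) = r • ∑ t : τ, w t • gen t := by
    intro r w
    rw [LMod.smul_finset_sum]
    exact Finset.sum_congr rfl fun t _ => LMod.mul_smul' r (w t) (gen t)
  let θL : FObj ⟶ MeObj := ⟨fun w => ∑ t : τ, w t • gen t, ⟨hθadd, fun r w => hθsmul r w⟩⟩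
  have hθval : ∀ w : τ → R, ((θL.1 w : ↥Me) : P) = ∑ t : τ, w t • (t : P) := by
    intro w
    rw [show (θL.1 w : P) = _ from AddSubgroup.val_sum Me Finset.univ (fun t => w t • gen t)]
    rfl
  -- surjectivity of θ
  have hQ' : ∀ m ∈ Me, m ∈ AddSubgroup.closure {v : P | ∃ (r : R) (t : P), t ∈ ζ ∧ v = r • t} := by
    set Q' := AddSubgroup.closure {v : P | ∃ (r : R) (t : P), t ∈ ζ ∧ v = r • t} with hQ'def
    have hsm : ∀ (r : R) (y : P), y ∈ Set.range (e : LinMap R P P).1 → r • y ∈ Q' := by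
      intro r y hy
      have hy2 := hζspan y hy
      refine smul_mem_of_closure r ?_ hy2
      rintro v (hv | hv)
      · exact AddSubgroup.subset_closure ⟨r, v, hv, rfl⟩
      · obtain ⟨r', x, hx, rfl⟩ := hv
        rw [← LMod.mul_smul']
        exact AddSubgroup.subset_closure ⟨r * r', x, hx, rfl⟩
    have hgen : ∀ p ∈ ζ, p ∈ Q' := by
      intro p hp
      have hq : ∀ v : P, (e : LinMap R P P).1 v ∈ Q' := by
        intro v
        have hv := hPu v
        induction hv using AddSubgroup.closure_induction with
        | mem y hy =>
          obtain ⟨r, n, rfl⟩ := hy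
          rw [(e : LinMap R P P).2.map_smul]
          exact hsm r _ ⟨n, rfl⟩
        | zero => rw [(e : LinMap R P P).2.map_zero]; exact Q'.zero_mem
        | add y z hy hz ihy ihz => rw [(e : LinMap R P P).2.map_add]; exact Q'.add_mem ihy ihz
        | neg y hy ihy => rw [(e : LinMap R P P).2.map_neg]; exact Q'.neg_mem ihy
      have := hq p
      rwa [idem_fix e he (hζsub hp)] at this
    intro m hm
    have hm2 := hζspan m (peSub_sub_range hact e hm)
    clear hm
    induction hm2 using AddSubgroup.closure_induction with
    | mem y hy =>
      rcases hy with hy | hy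
      · exact hgen y hy
      · obtain ⟨r, x, hx, rfl⟩ := hy
        exact AddSubgroup.subset_closure ⟨r, x, hx, rfl⟩
    | zero => exact Q'.zero_mem
    | add y z hy hz ihy ihz => exact Q'.add_mem ihy ihz
    | neg y hy ihy => exact Q'.neg_mem ihy
  have hsurj : ∀ m : ↥Me, ∃ w : τ → R, θL.1 w = m := by
    intro m
    have hkey : ∀ v ∈ AddSubgroup.closure {v : P | ∃ (r : R) (t : P), t ∈ ζ ∧ v = r • t},
        ∃ w : τ → R, ∑ t : τ, w t • (t : P) = v := by
      intro v hv
      induction hv using AddSubgroup.closure_induction with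
      | mem y hy =>
        obtain ⟨r, t0, ht0, rfl⟩ := hy
        refine ⟨Pi.single (⟨t0, ht0⟩ : τ) r, ?_⟩
        rw [Finset.sum_eq_single (⟨t0, ht0⟩ : τ)]
        · rw [Pi.single_eq_same]
        · intro t _ ht
          rw [Pi.single_eq_of_ne ht, LMod.zero_smul']
        · intro h
          exact absurd (Finset.mem_univ _) h
      | zero =>
        refine ⟨0, ?_⟩
        rw [Finset.sum_eq_zero]
        intro t _
        exact LMod.zero_smul' _
      | add y z hy hz ihy ihz =>
        obtain ⟨w, hw⟩ := ihy
        obtain ⟨w', hw'⟩ := ihz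
        refine ⟨w + w', ?_⟩
        rw [← hw, ← hw', ← Finset.sum_add_distrib]
        exact Finset.sum_congr rfl fun t _ => LMod.add_smul' (w t) (w' t) _
      | neg y hy ihy =>
        obtain ⟨w, hw⟩ := ihy
        refine ⟨-w, ?_⟩
        rw [← hw, ← Finset.sum_neg_distrib]
        exact Finset.sum_congr rfl fun t _ => LMod.neg_smul' (w t) _
    obtain ⟨w, hw⟩ := hkey m.1 (hQ' m.1 m.2)
    exact ⟨w, Subtype.ext (by rw [hθval w, hw])⟩
  haveI hepi : CategoryTheory.Epi θL := by
    constructor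
    intro Z g h hgh
    refine LinMap.ext (funext fun m => ?_)
    obtain ⟨w, hw⟩ := hsurj m
    have h2 := congrFun (congrArg Subtype.val hgh) w
    rw [← hw]
    exact h2
  -- choose a common index i0 with ζ ⊆ Im (incl i0)
  have hrep := c.exhaustive
  obtain ⟨i0, hi0⟩ := upper_bound_list (rel := rel) hne htrans hdir
    (ζ.toList.map fun p => (hrep p).choose)
  have hζincl : ∀ p ∈ ζ, p ∈ Set.range (c.incl i0).1 := by
    intro p hp
    have hj : rel (hrep p).choose i0 :=
      hi0 _ (List.mem_map.mpr ⟨p, Finset.mem_toList.mpr hp, rfl⟩)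
    obtain ⟨y, hy⟩ := (hrep p).choose_spec
    exact ⟨(D.map hj).1 y, by rw [c.compat hj y, hy]⟩
  have hMeincl : ∀ m ∈ Me, m ∈ Set.range (c.incl i0).1 := by
    intro m hm
    have hm2 := hQ' m hm
    clear hm
    induction hm2 using AddSubgroup.closure_induction with
    | mem y hy =>
      obtain ⟨r, t, ht, rfl⟩ := hy
      obtain ⟨z, hz⟩ := hζincl t ht
      exact ⟨r • z, by rw [(c.incl i0).2.map_smul, hz]⟩
    | zero => exact ⟨0, (c.incl i0).2.map_zero⟩
    | add y z hy hz ihy ihz =>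
      obtain ⟨a, ha⟩ := ihy
      obtain ⟨b, hb⟩ := ihz
      exact ⟨a + b, by rw [(c.incl i0).2.map_add, ha, hb]⟩
    | neg y hy ihy =>
      obtain ⟨a, ha⟩ := ihy
      exact ⟨-a, by rw [(c.incl i0).2.map_neg, ha]⟩
  -- the retraction ρ : P → P_{i0}
  obtain ⟨ρ, hρ⟩ := exists_retraction (P := P) (D := D) (fun {i j k} => htrans) hdir c i0
  have hρid : ∀ y : (D.obj i0).carrier, ρ.1 ((c.incl i0).1 y) = y := by
    intro y
    rw [hρ ((c.incl i0).1 y) (hrefl i0) y rfl, D.split_id]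
  have hinclρ : ∀ x ∈ Set.range (c.incl i0).1, (c.incl i0).1 (ρ.1 x) = x := by
    rintro x ⟨y, rfl⟩
    rw [hρid y]
  -- Pe is a retract of P_{i0}
  let uMor : MeObj ⟶ D.obj i0 := ⟨fun m => ρ.1 m.1,
    ⟨fun m n => ρ.2.map_add m.1 n.1, fun r m => ρ.2.map_smul r m.1⟩⟩
  let vMor : D.obj i0 ⟶ MeObj := ⟨fun p => ⟨(MulOpposite.op e) • (c.incl i0).1 p, _, rfl⟩,
    ⟨fun p q => Subtype.ext (by
        show MulOpposite.op e • (c.incl i0).1 (p + q) = _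
        rw [(c.incl i0).2.map_add, LMod.smul_add']
        rfl),
     fun r p => Subtype.ext (by
        show MulOpposite.op e • (c.incl i0).1 (r • p) = _
        rw [(c.incl i0).2.map_smul, ← smul_comm r (MulOpposite.op e)]
        rfl)⟩⟩
  have huv : uMor ≫ vMor = 𝟙 MeObj := by
    refine LinMap.ext (funext fun m => Subtype.ext ?_)
    show MulOpposite.op e • (c.incl i0).1 (ρ.1 m.1) = m.1
    rw [hinclρ m.1 (hMeincl m.1 m.2), hact e m.1,
      idem_fix e he (peSub_sub_range hact e m.2)]
  -- lift the retraction through θ using projectivity of P_{i0}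
  haveI hproj : CategoryTheory.Projective (D.obj i0) := (hProj i0).2
  let wMor : D.obj i0 ⟶ FObj := CategoryTheory.Projective.factorThru vMor θL
  have hwθ : wMor ≫ θL = vMor := CategoryTheory.Projective.factorThru_comp vMor θL
  let σ : MeObj ⟶ FObj := uMor ≫ wMor
  have hσθ : σ ≫ θL = 𝟙 MeObj := by
    show (uMor ≫ wMor) ≫ θL = 𝟙 MeObj
    rw [CategoryTheory.Category.assoc, hwθ, huv]
  -- the dual basis
  have hmemop : ∀ x : P, MulOpposite.op e • x ∈ Me := fun x => ⟨x, rfl⟩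
  have hopop : ∀ x : P, MulOpposite.op e • (MulOpposite.op e • x) = MulOpposite.op e • x := by
    intro x
    rw [← LMod.mul_smul', ← MulOpposite.op_mul, he]
  let b : τ → LinMap R P R := fun t =>
    ⟨fun x => σ.1 ⟨MulOpposite.op e • x, hmemop x⟩ t,
     ⟨fun x y => by
        have h1 : (⟨MulOpposite.op e • (x + y), hmemop (x + y)⟩ : ↥Me) =
            ⟨MulOpposite.op e • x, hmemop x⟩ + ⟨MulOpposite.op e • y, hmemop y⟩ :=
          Subtype.ext (LMod.smul_add' _ x y)
        rw [h1, σ.2.map_add]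
        rfl,
      fun r x => by
        have h1 : (⟨MulOpposite.op e • (r • x), hmemop (r • x)⟩ : ↥Me) =
            r • ⟨MulOpposite.op e • x, hmemop x⟩ :=
          Subtype.ext ((smul_comm r (MulOpposite.op e) x).symm)
        rw [h1, σ.2.map_smul]
        rfl⟩⟩
  refine ⟨ζ, b, ?_, ?_⟩
  · intro t
    have hb : b t = e • b t := by
      refine LinMap.ext (funext fun x => ?_)
      have h3 : (⟨MulOpposite.op e • (MulOpposite.op e • x),
          hmemop (MulOpposite.op e • x)⟩ : ↥Me) = ⟨MulOpposite.op e • x, hmemop x⟩ :=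
        Subtype.ext (hopop x)
      show σ.1 ⟨MulOpposite.op e • x, hmemop x⟩ t =
        σ.1 ⟨MulOpposite.op e • (MulOpposite.op e • x), hmemop (MulOpposite.op e • x)⟩ t
      rw [h3]
    rw [hb]
    exact smul_mem_umax e (b t)
  · intro x
    have h1 : θL.1 (σ.1 ⟨MulOpposite.op e • x, hmemop x⟩) = ⟨MulOpposite.op e • x, hmemop x⟩ := by
      have := congrFun (congrArg Subtype.val hσθ) (⟨MulOpposite.op e • x, hmemop x⟩ : ↥Me)
      exact this
    have h2 := congrArg Subtype.val h1
    rw [hθval] at h2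
    calc (e : LinMap R P P).1 x = MulOpposite.op e • x := (hact e x).symm
      _ = ∑ t : τ, σ.1 ⟨MulOpposite.op e • x, hmemop x⟩ t • (t : P) := h2.symm
      _ = ∑ t : τ, (b t).1 x • (t : P) := rfl

end dualbasis
section keypart
set_option linter.unusedSectionVars false

variable {R : Type u} [NonUnitalRing R] [HasLocalUnits R]
variable {P : Type u} [AddCommGroup P] [LMod R P]
variable {S : NonUnitalSubring (LinMap R P P)} [HasLocalUnits ↥S]
variable [LMod (↥S)ᵐᵒᵖ P] [SMulCommClass R (↥S)ᵐᵒᵖ P]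

/-- For `β ∈ G_P` and `x ∈ P`, the endomorphism `y ↦ (y)β·x` lies in `S`. -/
theorem sigma_mem
    (hact : ∀ (s : ↥S) (x : P), (MulOpposite.op s) • x = (s : LinMap R P P).1 x)
    (hSEnd : ((AddSubgroup.closure
        {h : LinMap R P P | ∃ s ∈ S, ∃ g : LinMap R P P, h = s * g} :
        AddSubgroup (LinMap R P P)) : Set (LinMap R P P)) = ↑S)
    (x : P) {β : LinMap R P R} (hβ : β ∈ umax ↥S (LinMap R P R)) :
    ∃ s : ↥S, ∀ y : P, (s : LinMap R P P).1 y = β.1 y • x := by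
  let sig : LinMap R P R → LinMap R P P := fun β' =>
    ⟨fun y => β'.1 y • x,
     ⟨fun a b => by rw [β'.2.map_add, LMod.add_smul'],
      fun r a => by rw [β'.2.map_smul, NonUnitalRing.smul_def, LMod.mul_smul']⟩⟩
  have hmem : sig β ∈ S := by
    have hcl : sig β ∈ AddSubgroup.closure
        {h : LinMap R P P | ∃ s ∈ S, ∃ g : LinMap R P P, h = s * g} := by
      induction hβ using AddSubgroup.closure_induction with
      | mem f hf =>
        obtain ⟨s, f', rfl⟩ := hf
        refine AddSubgroup.subset_closure ⟨(s : LinMap R P P), s.2, sig f', ?_⟩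
        refine LinMap.ext (funext fun y => ?_)
        show (s • f').1 y • x = (sig f').1 ((s : LinMap R P P).1 y)
        show f'.1 (MulOpposite.op s • y) • x = f'.1 ((s : LinMap R P P).1 y) • x
        rw [hact s y]
      | zero =>
        have h0 : sig 0 = 0 := LinMap.ext (funext fun y => LMod.zero_smul' x)
        rw [h0]; exact AddSubgroup.zero_mem _
      | add f f' hf hf' ihf ihf' =>
        have h0 : sig (f + f') = sig f + sig f' :=
          LinMap.ext (funext fun y => LMod.add_smul' (f.1 y) (f'.1 y) x)
        rw [h0]; exact AddSubgroup.add_mem _ ihf ihf'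
      | neg f hf ihf =>
        have h0 : sig (-f) = -(sig f) :=
          LinMap.ext (funext fun y => LMod.neg_smul' (f.1 y) x)
        rw [h0]; exact AddSubgroup.neg_mem _ ihf
    have h2 : sig β ∈ ((AddSubgroup.closure
        {h : LinMap R P P | ∃ s ∈ S, ∃ g : LinMap R P P, h = s * g} :
        AddSubgroup (LinMap R P P)) : Set (LinMap R P P)) := hcl
    rw [hSEnd] at h2
    exact h2
  exact ⟨⟨sig β, hmem⟩, fun y => rfl⟩

/-- If all "matrix coefficients" of `g` against `G_P` vanish, then `s • g = 0`
for all `s ∈ S`. -/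
theorem smul_hom_eq_zero (hPu : IsUnitary R P) (hlp : IsLocallyProjective R P)
    (hact : ∀ (s : ↥S) (x : P), (MulOpposite.op s) • x = (s : LinMap R P P).1 x)
    (hfg : ∀ f : LinMap R P P, f ∈ S → f * f = f → IsFGSet R (Set.range f.1))
    {N : Type u} [AddCommGroup N] [LMod R N] (s : ↥S) (g : LinMap R P N)
    (hvan : ∀ β : LinMap R P R, β ∈ umax ↥S (LinMap R P R) →
      ∀ y x : P, β.1 y • g.1 x = 0) :
    s • g = 0 := by
  obtain ⟨e, he, hfix⟩ := HasLocalUnits.exists_unit {s}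
  have hse : s * e = s := (hfix s (Finset.mem_singleton_self s)).2
  obtain ⟨ζ, b, hb, hbasis⟩ := dual_basis hPu hlp hact hfg e he
  refine LinMap.ext (funext fun x => ?_)
  show g.1 (MulOpposite.op s • x) = 0
  rw [hact s x]
  have h1 : (s : LinMap R P P).1 x = (e : LinMap R P P).1 ((s : LinMap R P P).1 x) :=
    (congrFun (congrArg Subtype.val (congrArg Subtype.val hse)) x).symm
  rw [h1, hbasis ((s : LinMap R P P).1 x), g.2.map_finset_sum, Finset.sum_eq_zero]
  intro t _
  rw [g.2.map_smul]
  exact hvan (b t) (hb t) _ _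

/-- The key vanishing lemma: if `st_P(N) = 0`, an element of `N` annihilated by
all evaluations of `G_P` is zero. -/
theorem key_vanish (hPu : IsUnitary R P) (hlp : IsLocallyProjective R P)
    (hact : ∀ (s : ↥S) (x : P), (MulOpposite.op s) • x = (s : LinMap R P P).1 x)
    (hfg : ∀ f : LinMap R P P, f ∈ S → f * f = f → IsFGSet R (Set.range f.1))
    (N : UMod.{u, u} R) (hst : stPZero R ↥S P N.carrier)
    (m : N.carrier)
    (hm : ∀ β : LinMap R P R, β ∈ umax ↥S (LinMap R P R) → ∀ x : P, β.1 x • m = 0) :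
    m = 0 := by
  let K : AddSubgroup N.carrier :=
    { carrier := {n | ∀ β : LinMap R P R, β ∈ umax ↥S (LinMap R P R) →
        ∀ x : P, β.1 x • n = 0}
      zero_mem' := fun β hβ x => LMod.smul_zero' _
      add_mem' := by
        intro a b ha hb β hβ x
        rw [LMod.smul_add', ha β hβ x, hb β hβ x, add_zero]
      neg_mem' := by
        intro a ha β hβ x
        rw [LMod.smul_neg', ha β hβ x, neg_zero] }
  refine hst K ?_ ?_ m hm
  · intro r n hn β hβ x
    have h2 := hn (MulOpposite.op r • β) (umax_stable (MulOpposite.op r) hβ) x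
    rw [← LMod.mul_smul']
    exact h2
  · intro s f hf
    exact smul_hom_eq_zero hPu hlp hact hfg s f fun β hβ y x => hf x β hβ y

end keypart

/-! ## STATEMENT 10
For a unitary module `N` with `st_P(N) = 0`: (a) `Hom_R(X,N) = 0` whenever
`SHom_R(P,X) = 0`; (b) if `N` is injective, the evaluation morphism
`γ_N : N → RHom_S(G_P, SHom_R(P,N))` is an isomorphism. -/
theorem hom_vanishing_and_gamma_iso
    (R : Type u) [NonUnitalRing R] [HasLocalUnits R]
    (P : Type u) [AddCommGroup P] [LMod R P]
    (hPu : IsUnitary R P)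
    (hlp : IsLocallyProjective R P)
    (S : NonUnitalSubring (LinMap R P P)) [HasLocalUnits ↥S]
    [LMod (↥S)ᵐᵒᵖ P] [SMulCommClass R (↥S)ᵐᵒᵖ P]
    (hact : ∀ (s : ↥S) (x : P), (MulOpposite.op s) • x = (s : LinMap R P P).1 x)
    (hPS : IsUnitary (↥S)ᵐᵒᵖ P)
    (hSEnd : ((AddSubgroup.closure
        {h : LinMap R P P | ∃ s ∈ S, ∃ g : LinMap R P P, h = s * g} :
        AddSubgroup (LinMap R P P)) : Set (LinMap R P P)) = ↑S)
    (hfg : ∀ f : LinMap R P P, f ∈ S → f * f = f → IsFGSet R (Set.range f.1))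
    (N : UMod.{u, u} R) (hst : stPZero R ↥S P N.carrier) :
    -- (a):
    (∀ X : UMod.{u, u} R, sHomZero R ↥S P X.carrier →
      ∀ f : LinMap R X.carrier N.carrier, f = 0) ∧
    -- (b):
    (CategoryTheory.Injective N →
      ∃ h : ∀ n : N.carrier, gammaFun R ↥S P N.carrier n ∈
          umax R (LinMap ↥S (GP R ↥S P) (SHom R ↥S P N.carrier)),
        Function.Bijective (fun n : N.carrier =>
          (⟨gammaFun R ↥S P N.carrier n, h n⟩ : RHomG R ↥S P (SHom R ↥S P N.carrier)))) := by
  classical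
  constructor
  -- Part (a)
  · intro X hX f
    let K : AddSubgroup N.carrier :=
      { carrier := Set.range f.1
        zero_mem' := ⟨0, f.2.map_zero⟩
        add_mem' := by rintro a b ⟨w, rfl⟩ ⟨w', rfl⟩; exact ⟨w + w', f.2.map_add w w'⟩
        neg_mem' := by rintro a ⟨w, rfl⟩; exact ⟨-w, f.2.map_neg w⟩ }
    have hKstab : ∀ (r : R) (x : N.carrier), x ∈ K → r • x ∈ K := by
      rintro r x ⟨w, rfl⟩
      exact ⟨r • w, f.2.map_smul r w⟩
    have hcond : ∀ (s : ↥S) (g : LinMap R P N.carrier), (∀ x, g.1 x ∈ K) → s • g = 0 := by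
      intro s g hg
      refine smul_hom_eq_zero hPu hlp hact hfg s g ?_
      intro β hβ y x
      obtain ⟨w, hw⟩ := hg x
      rw [← hw]
      have hq : gammaInner (N := X.carrier) w β = 0 := hX _ (gammaInner_mem w hβ)
      calc β.1 y • f.1 w = f.1 (β.1 y • w) := (f.2.map_smul _ w).symm
        _ = f.1 ((gammaInner w β).1 y) := rfl
        _ = f.1 ((0 : LinMap R P X.carrier).1 y) := by rw [hq]
        _ = f.1 0 := rfl
        _ = 0 := f.2.map_zero
    have hzero : ∀ m ∈ K, m = 0 := hst K hKstab hcond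
    exact LinMap.ext (funext fun x => hzero (f.1 x) ⟨x, rfl⟩)
  -- Part (b)
  · intro hinj
    haveI := hinj
    -- `γ` commutes with the module operations
    have hγsmul : ∀ (r : R) (n : N.carrier), gammaFun R ↥S P N.carrier (r • n) =
        r • gammaFun R ↥S P N.carrier n := by
      intro r n
      refine LinMap.ext (funext fun β => Subtype.ext (LinMap.ext (funext fun x => ?_)))
      show β.1.1 x • (r • n) = (β.1.1 x * r) • n
      rw [LMod.mul_smul']
    have hγadd : ∀ n n' : N.carrier, gammaFun R ↥S P N.carrier (n + n') =
        gammaFun R ↥S P N.carrier n + gammaFun R ↥S P N.carrier n' := by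
      intro n n'
      refine LinMap.ext (funext fun β => Subtype.ext (LinMap.ext (funext fun x => ?_)))
      exact LMod.smul_add' (β.1.1 x) n n'
    have hγzero : gammaFun R ↥S P N.carrier 0 = 0 := by
      refine LinMap.ext (funext fun β => Subtype.ext (LinMap.ext (funext fun x => ?_)))
      exact LMod.smul_zero' (β.1.1 x)
    have hγneg : ∀ n : N.carrier, gammaFun R ↥S P N.carrier (-n) =
        -gammaFun R ↥S P N.carrier n := by
      intro n
      refine LinMap.ext (funext fun β => Subtype.ext (LinMap.ext (funext fun x => ?_)))
      exact LMod.smul_neg' (β.1.1 x) n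
    have hmem : ∀ n : N.carrier, gammaFun R ↥S P N.carrier n ∈
        umax R (LinMap ↥S (GP R ↥S P) (SHom R ↥S P N.carrier)) := by
      intro n
      have hn := N.unitary n
      induction hn using AddSubgroup.closure_induction with
      | mem y hy =>
        obtain ⟨r, n', rfl⟩ := hy
        rw [hγsmul]
        exact smul_mem_umax r _
      | zero => rw [hγzero]; exact AddSubgroup.zero_mem _
      | add y z hy hz ihy ihz => rw [hγadd]; exact AddSubgroup.add_mem _ ihy ihz
      | neg y hy ihy => rw [hγneg]; exact AddSubgroup.neg_mem _ ihy
    refine ⟨hmem, ?_, ?_⟩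
    -- injectivity
    · intro n n' hnn'
      have h1 : gammaFun R ↥S P N.carrier n = gammaFun R ↥S P N.carrier n' :=
        congrArg Subtype.val hnn'
      have h2 : ∀ β : LinMap R P R, β ∈ umax ↥S (LinMap R P R) → ∀ x : P,
          β.1 x • (n - n') = 0 := by
        intro β hβ x
        have ha := congrFun (congrArg Subtype.val h1) (⟨β, hβ⟩ : GP R ↥S P)
        have h4 : β.1 x • n = β.1 x • n' :=
          congrArg (fun z : SHom R ↥S P N.carrier => z.1.1 x) ha
        rw [LMod.smul_sub', h4, sub_self]
      have h5 := key_vanish hPu hlp hact hfg N hst (n - n') h2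
      exact sub_eq_zero.mp h5
    -- surjectivity
    · intro Φel
      set Φ : LinMap ↥S (GP R ↥S P) (SHom R ↥S P N.carrier) := Φel.1 with hΦdef
      -- a right local unit for Φ
      have hQ : ∀ F : LinMap ↥S (GP R ↥S P) (SHom R ↥S P N.carrier),
          F ∈ umax R (LinMap ↥S (GP R ↥S P) (SHom R ↥S P N.carrier)) →
          ∃ fs : Finset R, ∀ u : R, (∀ r ∈ fs, u * r = r) →
            ∀ β : GP R ↥S P, F.1 (MulOpposite.op u • β) = F.1 β := by
        intro F hF
        induction hF using AddSubgroup.closure_induction with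
        | mem G hG =>
          obtain ⟨r, G', rfl⟩ := hG
          refine ⟨{r}, fun u hu β => ?_⟩
          have h6 : MulOpposite.op r • (MulOpposite.op u • β) = MulOpposite.op r • β := by
            rw [← LMod.mul_smul', ← MulOpposite.op_mul, hu r (Finset.mem_singleton_self r)]
          show G'.1 (MulOpposite.op r • (MulOpposite.op u • β)) = G'.1 (MulOpposite.op r • β)
          rw [h6]
        | zero => exact ⟨∅, fun u hu β => rfl⟩
        | add G G' hG hG' ihG ihG' =>
          obtain ⟨fs, hfs⟩ := ihG
          obtain ⟨fs', hfs'⟩ := ihG'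
          refine ⟨fs ∪ fs', fun u hu β => ?_⟩
          show G.1 (MulOpposite.op u • β) + G'.1 (MulOpposite.op u • β) = G.1 β + G'.1 β
          rw [hfs u (fun r hr => hu r (Finset.mem_union_left _ hr)) β,
            hfs' u (fun r hr => hu r (Finset.mem_union_right _ hr)) β]
        | neg G hG ihG =>
          obtain ⟨fs, hfs⟩ := ihG
          refine ⟨fs, fun u hu β => ?_⟩
          show -(G.1 (MulOpposite.op u • β)) = -(G.1 β)
          rw [hfs u hu β]
      obtain ⟨fs, hfs⟩ := hQ Φ Φel.2
      obtain ⟨u, _, hufix⟩ := HasLocalUnits.exists_unit fs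
      have huΦ : ∀ β : GP R ↥S P, Φ.1 (MulOpposite.op u • β) = Φ.1 β :=
        hfs u (fun r hr => (hufix r hr).1)
      -- the trace ideal T and the graph subgroup W
      set Tset : Set R := {r : R | ∃ (β : GP R ↥S P) (x : P), r = β.1.1 x} with hTset
      set T : AddSubgroup R := AddSubgroup.closure Tset with hTdef
      have hTstab : ∀ (r x : R), x ∈ T → r • x ∈ T := by
        intro r x hx
        refine closure_smul_stable ?_ r hx
        rintro r' v ⟨β, x', rfl⟩
        refine AddSubgroup.subset_closure ⟨β, r' • x', ?_⟩
        rw [β.1.2.map_smul]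
      letI instT : LMod R ↥T := subLMod T hTstab
      let TObj : UMod.{u, u} R := ⟨↥T, subgroup_unitary T hTstab⟩
      let RObj : UMod.{u, u} R := ⟨R, regular_unitary⟩
      let iota : TObj ⟶ RObj := ⟨Subtype.val, ⟨fun a b => rfl, fun r a => rfl⟩⟩
      haveI hmono : CategoryTheory.Mono iota := by
        constructor
        intro Z g h hgh
        exact LinMap.ext (funext fun x =>
          Subtype.ext (congrFun (congrArg Subtype.val hgh) x))
      set Wset : Set (R × N.carrier) :=
        {p | ∃ (β : GP R ↥S P) (x : P), p = (β.1.1 x, ((Φ.1 β).1).1 x)} with hWset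
      set W : AddSubgroup (R × N.carrier) := AddSubgroup.closure Wset with hWdef
      have hW2 : ∀ t ∈ T, ∃ nn : N.carrier, (t, nn) ∈ W := by
        intro t ht
        induction ht using AddSubgroup.closure_induction with
        | mem y hy =>
          obtain ⟨β, x, rfl⟩ := hy
          exact ⟨((Φ.1 β).1).1 x, AddSubgroup.subset_closure ⟨β, x, rfl⟩⟩
        | zero => exact ⟨0, W.zero_mem⟩
        | add y z hy hz ihy ihz =>
          obtain ⟨n1, hn1⟩ := ihy
          obtain ⟨n2, hn2⟩ := ihz
          exact ⟨n1 + n2, W.add_mem hn1 hn2⟩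
        | neg y hy ihy =>
          obtain ⟨n1, hn1⟩ := ihy
          exact ⟨-n1, W.neg_mem hn1⟩
      -- the invariant: membership in W is controlled by S-linearity of Φ
      have hInv : ∀ p ∈ W, ∀ β' : GP R ↥S P, ∃ g : GP R ↥S P,
          (∀ y : P, g.1.1 y = β'.1.1 y * p.1) ∧
          (∀ y : P, ((Φ.1 g).1).1 y = β'.1.1 y • p.2) := by
        intro p hp
        induction hp using AddSubgroup.closure_induction with
        | mem q hq =>
          obtain ⟨β, x, rfl⟩ := hq
          intro β'
          obtain ⟨s, hs⟩ := sigma_mem hact hSEnd x β'.2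
          refine ⟨s • β, fun y => ?_, fun y => ?_⟩
          · show β.1.1 (MulOpposite.op s • y) = β'.1.1 y * β.1.1 x
            rw [hact s y, hs y, β.1.2.map_smul]
            rfl
          · rw [Φ.2.map_smul]
            show ((Φ.1 β).1).1 (MulOpposite.op s • y) = β'.1.1 y • ((Φ.1 β).1).1 x
            rw [hact s y, hs y, (Φ.1 β).1.2.map_smul]
        | zero =>
          intro β'
          refine ⟨0, fun y => ?_, fun y => ?_⟩
          · show (0 : R) = β'.1.1 y * (0 : R)
            rw [mul_zero]
          · rw [Φ.2.map_zero]
            show (0 : N.carrier) = β'.1.1 y • (0 : N.carrier)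
            rw [LMod.smul_zero']
        | add q q' hq hq' ihq ihq' =>
          intro β'
          obtain ⟨g1, hg11, hg12⟩ := ihq β'
          obtain ⟨g2, hg21, hg22⟩ := ihq' β'
          refine ⟨g1 + g2, fun y => ?_, fun y => ?_⟩
          · show g1.1.1 y + g2.1.1 y = β'.1.1 y * (q.1 + q'.1)
            rw [hg11 y, hg21 y, mul_add]
          · rw [Φ.2.map_add]
            show ((Φ.1 g1).1).1 y + ((Φ.1 g2).1).1 y = β'.1.1 y • (q.2 + q'.2)
            rw [hg12 y, hg22 y, LMod.smul_add']
        | neg q hq ihq =>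
          intro β'
          obtain ⟨g1, hg11, hg12⟩ := ihq β'
          refine ⟨-g1, fun y => ?_, fun y => ?_⟩
          · show -(g1.1.1 y) = β'.1.1 y * (-q.1)
            rw [hg11 y, mul_neg]
          · rw [Φ.2.map_neg]
            show -(((Φ.1 g1).1).1 y) = β'.1.1 y • (-q.2)
            rw [hg12 y, LMod.smul_neg']
      -- functionality of W
      have hfun : ∀ (t : R) (n n' : N.carrier), (t, n) ∈ W → (t, n') ∈ W → n = n' := by
        intro t n n' hn hn'
        have h0 : ((0 : R), n - n') ∈ W := by
          have h1 := W.sub_mem hn hn'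
          have h2 : (t, n) - (t, n') = ((0 : R), n - n') := by
            refine Prod.ext ?_ rfl
            show t - t = 0
            rw [sub_self]
          rwa [h2] at h1
        have h3 : ∀ β : LinMap R P R, β ∈ umax ↥S (LinMap R P R) → ∀ y : P,
            β.1 y • (n - n') = 0 := by
          intro β hβ y
          obtain ⟨g, hg1, hg2⟩ := hInv _ h0 ⟨β, hβ⟩
          have hgz : g = 0 := by
            refine Subtype.ext (LinMap.ext (funext fun z => ?_))
            rw [hg1 z]
            exact mul_zero _
          have h4 := hg2 y
          rw [hgz, Φ.2.map_zero] at h4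
          exact h4.symm
        have h5 := key_vanish hPu hlp hact hfg N hst (n - n') h3
        exact sub_eq_zero.mp h5
      -- stability of W under scalars
      have hWsmul : ∀ (r : R) (p : R × N.carrier), p ∈ W → (r • p.1, r • p.2) ∈ W := by
        intro r p hp
        induction hp using AddSubgroup.closure_induction with
        | mem q hq =>
          obtain ⟨β, x, rfl⟩ := hq
          refine AddSubgroup.subset_closure ⟨β, r • x, ?_⟩
          refine Prod.ext ?_ ?_
          · show r • β.1.1 x = β.1.1 (r • x)
            rw [β.1.2.map_smul]
          · show r • ((Φ.1 β).1).1 x = ((Φ.1 β).1).1 (r • x)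
            rw [(Φ.1 β).1.2.map_smul]
        | zero =>
          have h1 : (r • ((0 : R × N.carrier).1), r • ((0 : R × N.carrier).2)) =
              (0 : R × N.carrier) := by
            refine Prod.ext ?_ ?_
            · exact LMod.smul_zero' r
            · exact LMod.smul_zero' r
          rw [h1]
          exact W.zero_mem
        | add q q' hq hq' ihq ihq' =>
          have h1 : (r • ((q + q').1), r • ((q + q').2)) =
              (r • q.1, r • q.2) + (r • q'.1, r • q'.2) := by
            refine Prod.ext ?_ ?_
            · exact LMod.smul_add' r q.1 q'.1
            · exact LMod.smul_add' r q.2 q'.2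
          rw [h1]
          exact W.add_mem ihq ihq'
        | neg q hq ihq =>
          have h1 : (r • ((-q).1), r • ((-q).2)) = -(r • q.1, r • q.2) := by
            refine Prod.ext ?_ ?_
            · exact LMod.smul_neg' r q.1
            · exact LMod.smul_neg' r q.2
          rw [h1]
          exact W.neg_mem ihq
      -- the homomorphism δ : T → N
      let δfun : ↥T → N.carrier := fun t => (hW2 t.1 t.2).choose
      have hδW : ∀ t : ↥T, (t.1, δfun t) ∈ W := fun t => (hW2 t.1 t.2).choose_spec
      have hδadd : ∀ a b : ↥T, δfun (a + b) = δfun a + δfun b := by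
        intro a b
        refine hfun (a.1 + b.1) _ _ (hδW (a + b)) ?_
        exact W.add_mem (hδW a) (hδW b)
      have hδsmul : ∀ (r : R) (a : ↥T), δfun (r • a) = r • δfun a := by
        intro r a
        refine hfun ((r • a : ↥T).1) _ _ (hδW (r • a)) ?_
        exact hWsmul r (a.1, δfun a) (hδW a)
      let δL : TObj ⟶ N := ⟨δfun, ⟨hδadd, hδsmul⟩⟩
      let δt : RObj ⟶ N := CategoryTheory.Injective.factorThru δL iota
      have hδt : iota ≫ δt = δL := CategoryTheory.Injective.comp_factorThru δL iota
      -- the preimage of Φ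
      refine ⟨δt.1 u, Subtype.ext (LinMap.ext (funext fun β =>
        Subtype.ext (LinMap.ext (funext fun x => ?_))))⟩
      show β.1.1 x • δt.1 u = ((Φ.1 β).1).1 x
      set g : GP R ↥S P := MulOpposite.op u • β with hgdef
      have h3 : g.1.1 x ∈ T := AddSubgroup.subset_closure ⟨g, x, rfl⟩
      have h1 : β.1.1 x • δt.1 u = δt.1 (g.1.1 x) := (δt.2.map_smul (β.1.1 x) u).symm
      have h4 : δt.1 (g.1.1 x) = δfun ⟨g.1.1 x, h3⟩ :=
        congrFun (congrArg Subtype.val hδt) (⟨g.1.1 x, h3⟩ : ↥T)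
      have h5 : δfun ⟨g.1.1 x, h3⟩ = ((Φ.1 g).1).1 x :=
        hfun (g.1.1 x) _ _ (hδW ⟨g.1.1 x, h3⟩) (AddSubgroup.subset_closure ⟨g, x, rfl⟩)
      have h6 : Φ.1 g = Φ.1 β := huΦ β
      rw [h1, h4, h5, h6]
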